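/- arXiv:2202.08339 — 13 statements merged into one kernel-verified Lean document; each statement's English description precedes it below -/
import Mathlib

section
/- Let R be an arithmetical ring and I a proper ideal of R. Then I is weakly prime if and only if I = I·R_p ∩ R for some prime ideal p of R. Moreover, if I is weakly prime, then I = I·R_p ∩ R for every prime ideal p of R with I^# ⊆ p. -/
/-- An arithmetical ring: localizations at maximal ideals have totally ordered ideal lattices. -/
def IsArithmetical (R : Type*) [CommRing R] : Prop :=
  ∀ (m : Ideal R) [m.IsMaximal],
    ∀ I J : Ideal (Localization.AtPrime m), I ≤ J ∨ J ≤ I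

/-- A weakly prime ideal: a proper ideal such that for all finitely generated ideals `A, B`,
`A ⊓ B ≤ I` implies `A ≤ I` or `B ≤ I`. -/
def IsWeaklyPrime {R : Type*} [CommRing R] (I : Ideal R) : Prop :=
  I ≠ ⊤ ∧ ∀ A B : Ideal R, A.FG → B.FG → A ⊓ B ≤ I → A ≤ I ∨ B ≤ I

/-- `I·R_p ∩ R`: the preimage under the localization map `R → R_p` of the ideal of `R_p`
generated by the image of `I`. -/
def locContract {R : Type*} [CommRing R] (I p : Ideal R) (hp : p.IsPrime) : Ideal R :=
  haveI := hp
  (I.map (algebraMap R (Localization.AtPrime p))).comap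
    (algebraMap R (Localization.AtPrime p))

section aux
variable {R : Type*} [CommRing R]

lemma mem_map_loc_iff (p : Ideal R) [p.IsPrime] (B : Ideal R) (a : R) :
    algebraMap R (Localization.AtPrime p) a ∈ B.map (algebraMap R (Localization.AtPrime p)) ↔
      ∃ s ∉ p, s * a ∈ B := by
  rw [show algebraMap R (Localization.AtPrime p) a
      = IsLocalization.mk' (Localization.AtPrime p) a (1 : p.primeCompl) by
    rw [IsLocalization.mk'_one]]
  rw [IsLocalization.mk'_mem_map_algebraMap_iff p.primeCompl]
  rfl

lemma colon_sup (hR : IsArithmetical R) (a b : R) :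
    (Ideal.span {b}).colon (Ideal.span {a}) ⊔ (Ideal.span {a}).colon (Ideal.span {b}) = ⊤ := by
  by_contra h
  obtain ⟨m, hm, hle⟩ := Ideal.exists_le_maximal _ h
  have key : ∀ x y : R,
      algebraMap R (Localization.AtPrime m) x
        ∈ Ideal.span ({algebraMap R (Localization.AtPrime m) y} : Set _) →
      (Ideal.span {y}).colon (Ideal.span {x}) ≤ m → False := by
    intro x y hxy hcol
    have : algebraMap R (Localization.AtPrime m) x
        ∈ (Ideal.span {y}).map (algebraMap R (Localization.AtPrime m)) := by
      refine Ideal.span_le.mpr ?_ hxy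
      simp only [Set.singleton_subset_iff, SetLike.mem_coe]
      exact Ideal.mem_map_of_mem _ (Ideal.mem_span_singleton_self y)
    obtain ⟨s, hs, hsx⟩ := (mem_map_loc_iff m _ x).mp this
    exact hs (hcol (Ideal.mem_colon_span_singleton.mpr hsx))
  rcases hR m (Ideal.span {algebraMap R (Localization.AtPrime m) a})
      (Ideal.span {algebraMap R (Localization.AtPrime m) b}) with hc | hc
  · exact key a b (hc (Ideal.mem_span_singleton_self _))
      (le_trans le_sup_left hle)
  · exact key b a (hc (Ideal.mem_span_singleton_self _))
      (le_trans le_sup_right hle)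

lemma loc_chain (hR : IsArithmetical R) (p : Ideal R) [p.IsPrime]
    (A B : Ideal (Localization.AtPrime p)) : A ≤ B ∨ B ≤ A := by
  by_contra h
  push_neg at h
  obtain ⟨hAB, hBA⟩ := h
  obtain ⟨x, hxA, hxB⟩ := SetLike.not_le_iff_exists.mp hAB
  obtain ⟨y, hyB, hyA⟩ := SetLike.not_le_iff_exists.mp hBA
  -- reduce to images of elements of R
  obtain ⟨⟨a, s⟩, hx⟩ := IsLocalization.mk'_surjective p.primeCompl x
  obtain ⟨⟨b, t⟩, hy⟩ := IsLocalization.mk'_surjective p.primeCompl y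
  dsimp only at hx hy
  have hax : algebraMap R (Localization.AtPrime p) a = x * algebraMap R _ (s : R) := by
    rw [← hx, IsLocalization.mk'_spec]
  have hby : algebraMap R (Localization.AtPrime p) b = y * algebraMap R _ (t : R) := by
    rw [← hy, IsLocalization.mk'_spec]
  have hsu := IsLocalization.map_units (Localization.AtPrime p) s
  have htu := IsLocalization.map_units (Localization.AtPrime p) t
  -- x ∈ span(a/1) and y ∈ span(b/1)
  have hxa : x ∈ Ideal.span ({algebraMap R (Localization.AtPrime p) a} : Set _) := by
    rw [← hx]
    exact Ideal.mem_span_singleton.mpr ⟨IsLocalization.mk' _ 1 s, by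
      rw [← IsLocalization.mk'_one (M := p.primeCompl) (Localization.AtPrime p) a,
        ← IsLocalization.mk'_mul, mul_one, one_mul]⟩
  have hyb : y ∈ Ideal.span ({algebraMap R (Localization.AtPrime p) b} : Set _) := by
    rw [← hy]
    exact Ideal.mem_span_singleton.mpr ⟨IsLocalization.mk' _ 1 t, by
      rw [← IsLocalization.mk'_one (M := p.primeCompl) (Localization.AtPrime p) b,
        ← IsLocalization.mk'_mul, mul_one, one_mul]⟩
  have haA : algebraMap R (Localization.AtPrime p) a ∈ A := by
    rw [hax]; exact A.mul_mem_right _ hxA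
  have hbB : algebraMap R (Localization.AtPrime p) b ∈ B := by
    rw [hby]; exact B.mul_mem_right _ hyB
  -- use colon_sup
  have hsup := colon_sup hR a b
  have h1 : (1 : R) ∈ (Ideal.span {b}).colon (Ideal.span {a}) ⊔
      (Ideal.span {a}).colon (Ideal.span {b}) := hsup ▸ Submodule.mem_top
  obtain ⟨u, hu, w, hw, huw⟩ := Submodule.mem_sup.mp h1
  have hup : u ∉ p ∨ w ∉ p := by
    by_contra hc
    push_neg at hc
    exact (Ideal.IsPrime.ne_top ‹p.IsPrime›) (Ideal.eq_top_of_isUnit_mem _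
      (huw ▸ Ideal.add_mem p hc.1 hc.2) isUnit_one)
  -- case split
  rcases hup with hu' | hw'
  · -- u * a ∈ span b, u a unit times: a/1 ∈ span(b/1) ≤ span-image ⇒ x ∈ B-ish? need x ∈ B
    have hua : u * a ∈ Ideal.span {b} := Ideal.mem_colon_span_singleton.mp hu
    obtain ⟨c, hc⟩ := Ideal.mem_span_singleton'.mp hua
    -- algebraMap a = (algebraMap u)⁻¹ * algebraMap c * algebraMap b
    have huu := IsLocalization.map_units (Localization.AtPrime p) (⟨u, hu'⟩ : p.primeCompl)
    have : algebraMap R (Localization.AtPrime p) a ∈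
        Ideal.span ({algebraMap R (Localization.AtPrime p) b} : Set _) := by
      rw [← Ideal.unit_mul_mem_iff_mem _ huu]
      rw [← map_mul, ← hc]
      exact Ideal.mem_span_singleton'.mpr ⟨algebraMap R _ c, by rw [← map_mul]⟩
    -- then x ∈ span(a/1) ≤ span(b/1), and b/1 ∈ B so x ∈ B
    have : x ∈ Ideal.span ({algebraMap R (Localization.AtPrime p) b} : Set _) :=
      (Ideal.span_le.mpr (by simpa using this)) hxa
    exact hxB ((Ideal.span_le.mpr (by simpa using hbB)) this)
  · have hwb : w * b ∈ Ideal.span {a} := Ideal.mem_colon_span_singleton.mp hw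
    obtain ⟨c, hc⟩ := Ideal.mem_span_singleton'.mp hwb
    have hww := IsLocalization.map_units (Localization.AtPrime p) (⟨w, hw'⟩ : p.primeCompl)
    have : algebraMap R (Localization.AtPrime p) b ∈
        Ideal.span ({algebraMap R (Localization.AtPrime p) a} : Set _) := by
      rw [← Ideal.unit_mul_mem_iff_mem _ hww]
      rw [← map_mul, ← hc]
      exact Ideal.mem_span_singleton'.mpr ⟨algebraMap R _ c, by rw [← map_mul]⟩
    have : y ∈ Ideal.span ({algebraMap R (Localization.AtPrime p) a} : Set _) :=
      (Ideal.span_le.mpr (by simpa using this)) hyb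
    exact hyA ((Ideal.span_le.mpr (by simpa using haA)) this)

lemma mem_locContract {I p : Ideal R} (hp : p.IsPrime) {a : R} :
    a ∈ locContract I p hp ↔ ∃ s ∉ p, s * a ∈ I := by
  haveI := hp
  rw [locContract, Ideal.mem_comap, mem_map_loc_iff]

lemma eq_locContract_of_sharp_le {I p : Ideal R} (hp : p.IsPrime)
    (hsub : {a : R | ∃ r ∉ I, a * r ∈ I} ⊆ ↑p) : I = locContract I p hp := by
  haveI := hp
  refine le_antisymm Ideal.le_comap_map fun a ha => ?_
  obtain ⟨s, hs, hsa⟩ := (mem_locContract hp).mp ha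
  by_contra haI
  exact hs (hsub ⟨a, haI, hsa⟩)

/-- If `I` is the contraction of its extension to some localization at a prime, with totally
ordered ideal lattice there, then `I` is weakly prime. -/
lemma weaklyPrime_of_contract (hR : IsArithmetical R) (I : Ideal R) (hI : I ≠ ⊤)
    (p : Ideal R) (hp : p.IsPrime) (hEq : I = locContract I p hp) : IsWeaklyPrime I := by
  haveI := hp
  refine ⟨hI, fun A B _ _ hAB => ?_⟩
  have key : ∀ C D : Ideal R,
      C.map (algebraMap R (Localization.AtPrime p)) ≤
        D.map (algebraMap R (Localization.AtPrime p)) → C ⊓ D ≤ I → C ≤ I := by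
    intro C D hle hCD
    intro a ha
    have h1 : algebraMap R (Localization.AtPrime p) a ∈
        D.map (algebraMap R (Localization.AtPrime p)) :=
      hle (Ideal.mem_map_of_mem _ ha)
    obtain ⟨s, hs, hsa⟩ := (mem_map_loc_iff p D a).mp h1
    have : s * a ∈ C ⊓ D := ⟨C.mul_mem_left s ha, hsa⟩
    have hsI : s * a ∈ I := hCD this
    rw [hEq]
    exact (mem_locContract hp).mpr ⟨s, hs, hsI⟩
  rcases loc_chain hR p (A.map (algebraMap R (Localization.AtPrime p)))
      (B.map (algebraMap R (Localization.AtPrime p))) with hc | hc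
  · exact Or.inl (key A B hc hAB)
  · exact Or.inr (key B A hc (by rwa [inf_comm]))

/-- For a weakly prime ideal `I` in an arithmetical ring, `I^#` is an ideal. -/
def sharpIdeal (hR : IsArithmetical R) (I : Ideal R) (hWP : IsWeaklyPrime I) : Ideal R where
  carrier := {a : R | ∃ r ∉ I, a * r ∈ I}
  zero_mem' := ⟨1, (Ideal.ne_top_iff_one I).mp hWP.1, by simp⟩
  smul_mem' := by
    rintro c a ⟨r, hr, har⟩
    exact ⟨r, hr, by simpa [smul_eq_mul, mul_assoc] using I.mul_mem_left c har⟩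
  add_mem' := by
    rintro a b ⟨r, hr, har⟩ ⟨t, ht, hbt⟩
    have h1 : (1 : R) ∈ (Ideal.span {r}).colon (Ideal.span {t}) ⊔
        (Ideal.span {t}).colon (Ideal.span {r}) := (colon_sup hR t r).symm ▸ Submodule.mem_top
    obtain ⟨u, hu, w, hw, huw⟩ := Submodule.mem_sup.mp h1
    have hut : u * t ∈ Ideal.span {r} := Ideal.mem_colon_span_singleton.mp hu
    have hwr : w * r ∈ Ideal.span {t} := Ideal.mem_colon_span_singleton.mp hw
    obtain ⟨c, hc⟩ := Ideal.mem_span_singleton'.mp hut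
    obtain ⟨d, hd⟩ := Ideal.mem_span_singleton'.mp hwr
    -- (a+b)*(u*t) ∈ I and (a+b)*(w*r) ∈ I
    have hA : (a + b) * (u * t) ∈ I := by
      have h1 : a * (u * t) ∈ I := by
        have : a * (u * t) = c * (a * r) := by rw [← hc]; ring
        rw [this]; exact I.mul_mem_left c har
      have h2 : b * (u * t) ∈ I := by
        have : b * (u * t) = u * (b * t) := by ring
        rw [this]; exact I.mul_mem_left u hbt
      have : (a + b) * (u * t) = a * (u * t) + b * (u * t) := by ring
      rw [this]; exact I.add_mem h1 h2
    have hB : (a + b) * (w * r) ∈ I := by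
      have h1 : a * (w * r) ∈ I := by
        have : a * (w * r) = w * (a * r) := by ring
        rw [this]; exact I.mul_mem_left w har
      have h2 : b * (w * r) ∈ I := by
        have : b * (w * r) = d * (b * t) := by rw [← hd]; ring
        rw [this]; exact I.mul_mem_left d hbt
      have : (a + b) * (w * r) = a * (w * r) + b * (w * r) := by ring
      rw [this]; exact I.add_mem h1 h2
    by_cases hutI : u * t ∈ I
    · by_cases hwrI : w * r ∈ I
      · -- span r ⊓ span t ≤ I, contradicting weak primeness
        exfalso
        have hle : Ideal.span {r} ⊓ Ideal.span {t} ≤ I := by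
          intro x ⟨hxr, hxt⟩
          obtain ⟨α, hα⟩ := Ideal.mem_span_singleton'.mp hxr
          obtain ⟨β, hβ⟩ := Ideal.mem_span_singleton'.mp hxt
          have key : β * (u * t) + α * (w * r) = x := by
            rw [show β * (u * t) = u * (β * t) by ring, show α * (w * r) = w * (α * r) by ring,
              hβ, hα, ← add_mul, huw, one_mul]
          rw [← key]
          exact I.add_mem (I.mul_mem_left β hutI) (I.mul_mem_left α hwrI)
        rcases hWP.2 _ _ (Submodule.fg_span_singleton r) (Submodule.fg_span_singleton t) hle
          with h | h
        · exact hr (h (Ideal.mem_span_singleton_self r))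
        · exact ht (h (Ideal.mem_span_singleton_self t))
      · exact ⟨w * r, hwrI, hB⟩
    · exact ⟨u * t, hutI, hA⟩

lemma sharpIdeal_isPrime (hR : IsArithmetical R) (I : Ideal R) (hWP : IsWeaklyPrime I) :
    (sharpIdeal hR I hWP).IsPrime := by
  constructor
  · intro h
    have h1 : (1 : R) ∈ sharpIdeal hR I hWP := h ▸ Submodule.mem_top
    obtain ⟨r, hr, h1r⟩ := h1
    exact hr (by simpa using h1r)
  · rintro x y ⟨r, hr, hxyr⟩
    by_cases hyr : y * r ∈ I
    · exact Or.inr ⟨r, hr, hyr⟩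
    · exact Or.inl ⟨y * r, hyr, by rwa [← mul_assoc]⟩

end aux

/-- Let `R` be an arithmetical ring and `I` a proper ideal.  Then `I` is weakly prime if and
only if `I = I·R_p ∩ R` for some prime ideal `p` of `R`.  Moreover, if `I` is weakly prime,
then `I = I·R_p ∩ R` for every prime ideal `p` with `I^# ⊆ p`. -/
theorem stmt2 {R : Type*} [CommRing R] (hR : IsArithmetical R)
    (I : Ideal R) (hI : I ≠ ⊤) :
    (IsWeaklyPrime I ↔ ∃ (p : Ideal R) (hp : p.IsPrime), I = locContract I p hp) ∧
    (IsWeaklyPrime I → ∀ (p : Ideal R) (hp : p.IsPrime),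
      {a : R | ∃ r ∉ I, a * r ∈ I} ⊆ ↑p → I = locContract I p hp) := by
  constructor
  · constructor
    · intro hWP
      exact ⟨sharpIdeal hR I hWP, sharpIdeal_isPrime hR I hWP,
        eq_locContract_of_sharp_le _ fun a ha => ha⟩
    · rintro ⟨p, hp, hEq⟩
      exact weaklyPrime_of_contract hR I hI p hp hEq
  · intro _ p hp hsub
    exact eq_locContract_of_sharp_le hp hsub
end

section
/- Let R be an arithmetical ring and p a prime ideal of R. Then the set of weakly prime ideals I of R with I^# ⊆ p is totally ordered by inclusion: if I and J are weakly prime ideals with I^# ⊆ p and J^# ⊆ p, then I ⊆ J or J ⊆ I. -/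
private lemma aux3 {R : Type*} [CommRing R] (p m : Ideal R) [m.IsMaximal] (hpm : p ≤ m)
    (K : Ideal R) (x y : R) (hx : x ∈ K) (hy : y ∉ K)
    (hK : {a : R | ∃ r ∉ K, a * r ∈ K} ⊆ ↑p)
    (h : algebraMap R (Localization.AtPrime m) y ∈
      Ideal.span {algebraMap R (Localization.AtPrime m) x}) : False := by
  set f := algebraMap R (Localization.AtPrime m) with hf
  rw [Ideal.mem_span_singleton] at h
  obtain ⟨c, hc⟩ := h
  obtain ⟨⟨r, u⟩, hru⟩ := IsLocalization.mk'_surjective m.primeCompl c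
  have h1 : f ↑u * c = f r := by
    rw [← hru, hf, IsLocalization.mul_mk'_eq_mk'_of_mul, IsLocalization.mk'_mul_cancel_left]
  have heq : f (↑u * y) = f (r * x) := by
    rw [map_mul, map_mul, hc, mul_comm (f x) c, ← mul_assoc, h1]
  obtain ⟨v, hv⟩ := (IsLocalization.eq_iff_exists m.primeCompl _).mp heq
  have hmem : (↑v * ↑u : R) * y ∈ K := by
    have he : (↑v * ↑u : R) * y = ↑v * (r * x) := by rw [mul_assoc]; exact hv
    rw [he]
    exact K.mul_mem_left _ (K.mul_mem_left _ hx)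
  have hvp : (↑v * ↑u : R) ∈ p := hK ⟨y, hy, hmem⟩
  exact (m.primeCompl.mul_mem v.2 u.2 : (↑v * ↑u : R) ∈ m.primeCompl) (hpm hvp)

/-- Let `R` be an arithmetical ring and `p` a prime ideal of `R`.  The set of weakly prime
ideals `I` with `I^# ⊆ p` is totally ordered by inclusion. -/
theorem stmt3 {R : Type*} [CommRing R] (hR : IsArithmetical R)
    (p : Ideal R) (hp : p.IsPrime) (I J : Ideal R)
    (hI : IsWeaklyPrime I) (hJ : IsWeaklyPrime J)
    (hIp : {a : R | ∃ r ∉ I, a * r ∈ I} ⊆ ↑p)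
    (hJp : {a : R | ∃ r ∉ J, a * r ∈ J} ⊆ ↑p) :
    I ≤ J ∨ J ≤ I := by
  by_contra hcon
  push_neg at hcon
  obtain ⟨hIJ, hJI⟩ := hcon
  obtain ⟨a, haI, haJ⟩ := SetLike.not_le_iff_exists.mp hIJ
  obtain ⟨b, hbJ, hbI⟩ := SetLike.not_le_iff_exists.mp hJI
  obtain ⟨m, hm, hpm⟩ := p.exists_le_maximal hp.ne_top
  haveI := hm
  set f := algebraMap R (Localization.AtPrime m)
  rcases hR m (Ideal.span {f a}) (Ideal.span {f b}) with h | h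
  · exact aux3 p m hpm J b a hbJ haJ hJp (h (Ideal.mem_span_singleton_self _))
  · exact aux3 p m hpm I a b haI hbI hIp (h (Ideal.mem_span_singleton_self _))
end

section
/- Let R be a Prüfer domain, J a weakly prime ideal of R, K a nonzero finitely generated ideal of R, and J_K := {a ∈ R : (aR : K) ⊆ J}. Then for every prime ideal p of R with J^# ⊆ p one has J_K = (J·K)·R_p ∩ R. Consequently J_K is a weakly prime ideal of R and (J_K)^# = J^#. -/
section Helpers
variable {R : Type*} [CommRing R]

/-- membership in the extension of an ideal to a localization at a prime -/
lemma memMapIff (p : Ideal R) [p.IsPrime] (I : Ideal R) (x : R) :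
    algebraMap R (Localization.AtPrime p) x ∈
      I.map (algebraMap R (Localization.AtPrime p)) ↔ ∃ s ∉ p, s * x ∈ I := by
  rw [← IsLocalization.mk'_one (M := p.primeCompl) (Localization.AtPrime p) x,
    IsLocalization.mk'_mem_map_algebraMap_iff p.primeCompl]
  exact ⟨fun ⟨s, hs, h⟩ => ⟨s, hs, h⟩, fun ⟨s, hs, h⟩ => ⟨s, hs, h⟩⟩

/-- transfer of divisibility in the localization back to `R` -/
lemma dvdDown (p : Ideal R) [p.IsPrime] {k c : R}
    (h : algebraMap R (Localization.AtPrime p) k ∣ algebraMap R (Localization.AtPrime p) c) :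
    ∃ s ∉ p, ∃ x, s * c = k * x := by
  obtain ⟨w, hw⟩ := h
  obtain ⟨⟨x, s⟩, rfl⟩ := IsLocalization.mk'_surjective p.primeCompl w
  dsimp only at hw
  have h2 : algebraMap R (Localization.AtPrime p) (c * s) =
      algebraMap R (Localization.AtPrime p) (k * x) := by
    rw [map_mul, map_mul, hw, mul_assoc, IsLocalization.mk'_spec]
  obtain ⟨u, hu⟩ := (IsLocalization.eq_iff_exists p.primeCompl _).mp h2
  refine ⟨u * s, (u * s : p.primeCompl).2, u * x, ?_⟩
  have hu' : (u : R) * (c * s) = u * (k * x) := hu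
  push_cast
  linear_combination hu'

/-- transfer of divisibility up to a unit into the localization -/
lemma dvdUp (p : Ideal R) [p.IsPrime] {a b s x : R} (hs : s ∉ p) (h : s * b = a * x) :
    algebraMap R (Localization.AtPrime p) a ∣ algebraMap R (Localization.AtPrime p) b := by
  have hu : IsUnit (algebraMap R (Localization.AtPrime p) s) :=
    IsLocalization.map_units (Localization.AtPrime p) (⟨s, hs⟩ : p.primeCompl)
  obtain ⟨v, hv⟩ := hu.exists_left_inv
  refine ⟨v * algebraMap R (Localization.AtPrime p) x, ?_⟩
  have h2 : algebraMap R (Localization.AtPrime p) (s * b) =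
      algebraMap R (Localization.AtPrime p) (a * x) := by rw [h]
  rw [map_mul, map_mul] at h2
  calc algebraMap R (Localization.AtPrime p) b
      = (v * algebraMap R (Localization.AtPrime p) s) *
        algebraMap R (Localization.AtPrime p) b := by rw [hv, one_mul]
    _ = v * (algebraMap R (Localization.AtPrime p) s *
        algebraMap R (Localization.AtPrime p) b) := by ring
    _ = v * (algebraMap R (Localization.AtPrime p) a *
        algebraMap R (Localization.AtPrime p) x) := by rw [h2]
    _ = algebraMap R (Localization.AtPrime p) a *
        (v * algebraMap R (Localization.AtPrime p) x) := by ring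

/-- in a Prüfer (arithmetical) ring, divisibility of images in any localization at a prime
is total -/
lemma dvdTotal (hR : IsArithmetical R) (p : Ideal R) [hp : p.IsPrime] (a b : R) :
    algebraMap R (Localization.AtPrime p) a ∣ algebraMap R (Localization.AtPrime p) b ∨
    algebraMap R (Localization.AtPrime p) b ∣ algebraMap R (Localization.AtPrime p) a := by
  obtain ⟨m, hm, hpm⟩ := p.exists_le_maximal hp.ne_top
  haveI := hm
  rcases hR m (Ideal.span {algebraMap R (Localization.AtPrime m) a})
      (Ideal.span {algebraMap R (Localization.AtPrime m) b}) with h | h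
  · -- span a ≤ span b : b ∣ a in R_m
    have hd := Ideal.span_singleton_le_span_singleton.mp h
    obtain ⟨s, hs, x, hx⟩ := dvdDown m hd
    exact Or.inr (dvdUp p (fun hc => hs (hpm hc)) hx)
  · have hd := Ideal.span_singleton_le_span_singleton.mp h
    obtain ⟨s, hs, x, hx⟩ := dvdDown m hd
    exact Or.inl (dvdUp p (fun hc => hs (hpm hc)) hx)

/-- a finite set has a divisibility-minimal element when divisibility is total -/
lemma existsMinDvd {L : Type*} [CommMonoidWithZero L] (g : R → L)
    (tot : ∀ a b : R, g a ∣ g b ∨ g b ∣ g a) (T : Finset R) (hT : T.Nonempty) :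
    ∃ k ∈ T, ∀ t ∈ T, g k ∣ g t := by
  classical
  induction T using Finset.induction_on with
  | empty => exact absurd hT (by simp)
  | @insert a T' ha ih =>
    rcases T'.eq_empty_or_nonempty with rfl | hT'
    · exact ⟨a, by simp, by simp⟩
    · obtain ⟨k, hk, hkd⟩ := ih hT'
      rcases tot a k with h | h
      · refine ⟨a, Finset.mem_insert_self _ _, fun t ht => ?_⟩
        rcases Finset.mem_insert.mp ht with rfl | ht'
        · exact dvd_rfl
        · exact h.trans (hkd t ht')
      · refine ⟨k, Finset.mem_insert_of_mem hk, fun t ht => ?_⟩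
        rcases Finset.mem_insert.mp ht with rfl | ht'
        · exact h
        · exact hkd t ht'

/-- a finitely generated ideal extends to a principal ideal in a localization at a prime -/
lemma mapPrincipal (hR : IsArithmetical R) (p : Ideal R) [p.IsPrime] {A : Ideal R}
    (hA : A.FG) :
    A = ⊥ ∨ ∃ k ∈ A, A.map (algebraMap R (Localization.AtPrime p)) =
      Ideal.span {algebraMap R (Localization.AtPrime p) k} := by
  obtain ⟨T, hT⟩ := hA
  rcases T.eq_empty_or_nonempty with rfl | hTne
  · left; simpa using hT.symm
  · right
    obtain ⟨k, hkT, hkd⟩ := existsMinDvd (algebraMap R (Localization.AtPrime p))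
      (dvdTotal hR p) T hTne
    refine ⟨k, hT ▸ Ideal.subset_span hkT, le_antisymm ?_ ?_⟩
    · rw [← hT, Ideal.map_span]
      refine Ideal.span_le.mpr ?_
      rintro y ⟨t, ht, rfl⟩
      exact Ideal.mem_span_singleton.mpr (hkd t ht)
    · rw [Ideal.span_le, Set.singleton_subset_iff]
      exact Ideal.mem_map_of_mem _ (hT ▸ Ideal.subset_span hkT)

/-- clearing denominators: if `k` locally generates `K`, a single `s ∉ p` works for all of
`K` -/
lemma clearDenom (p : Ideal R) [p.IsPrime] {K : Ideal R} (hKfg : K.FG) {k : R}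
    (h : ∀ c ∈ K, ∃ s ∉ p, ∃ x, s * c = k * x) :
    ∃ S ∉ p, ∀ c ∈ K, S * c ∈ Ideal.span {k} := by
  classical
  obtain ⟨T, hT⟩ := hKfg
  choose! s hs x hx using h
  refine ⟨∏ t ∈ T, s t, ?_, ?_⟩
  · have : (∏ t ∈ T, s t) ∈ p.primeCompl := by
      refine Submonoid.prod_mem _ fun t ht => ?_
      exact hs t (hT ▸ Ideal.subset_span ht)
    exact this
  · intro c hc
    have hKle : K ≤ (Ideal.span {k}).colon (Ideal.span {∏ t ∈ T, s t}) := by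
      rw [← hT, Ideal.span_le]
      intro t ht
      have htK : t ∈ K := hT ▸ Ideal.subset_span ht
      rw [SetLike.mem_coe, Ideal.mem_colon_span_singleton]
      obtain ⟨m, hm⟩ := Finset.dvd_prod_of_mem s ht
      rw [Ideal.mem_span_singleton]
      refine ⟨x t * m, ?_⟩
      rw [hm]
      have := hx t htK
      linear_combination m * this
    have := hKle hc
    rw [Ideal.mem_colon_span_singleton] at this
    rwa [mul_comm]

/-- for a weakly prime ideal `J`, the set `J^#` is a prime ideal -/
lemma sharpPrime (J : Ideal R) (hJ : IsWeaklyPrime J) :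
    ∃ q : Ideal R, (q : Set R) = {a : R | ∃ r ∉ J, a * r ∈ J} ∧ q.IsPrime := by
  have h1J : (1 : R) ∉ J := (Ideal.ne_top_iff_one J).mp hJ.1
  refine ⟨{ carrier := {a : R | ∃ r ∉ J, a * r ∈ J}
            add_mem' := ?_
            zero_mem' := ⟨1, h1J, by simp⟩
            smul_mem' := ?_ }, rfl, ?_, ?_⟩
  · rintro a b ⟨r, hr, har⟩ ⟨s, hs, hbs⟩
    have hns : ¬(Ideal.span {r} ⊓ Ideal.span {s} ≤ J) := by
      intro h
      rcases hJ.2 _ _ ⟨{r}, by simp⟩ ⟨{s}, by simp⟩ h with h' | h'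
      · exact hr (h' (Ideal.mem_span_singleton_self r))
      · exact hs (h' (Ideal.mem_span_singleton_self s))
    obtain ⟨t, htm, htJ⟩ := SetLike.not_le_iff_exists.mp hns
    obtain ⟨u, htu⟩ := Ideal.mem_span_singleton.mp htm.1
    obtain ⟨v, htv⟩ := Ideal.mem_span_singleton.mp htm.2
    refine ⟨t, htJ, ?_⟩
    have e1 : a * t = a * r * u := by rw [htu]; ring
    have e2 : b * t = b * s * v := by rw [htv]; ring
    have key : (a + b) * t = a * r * u + b * s * v := by rw [add_mul, e1, e2]
    exact key ▸ J.add_mem (J.mul_mem_right u har) (J.mul_mem_right v hbs)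
  · rintro c a ⟨r, hr, har⟩
    exact ⟨r, hr, by rw [smul_eq_mul, mul_assoc]; exact J.mul_mem_left c har⟩
  · rw [Ideal.ne_top_iff_one]
    rintro ⟨r, hr, h1r⟩
    rw [one_mul] at h1r
    exact hr h1r
  · rintro x y ⟨r, hr, hxyr⟩
    by_cases hyr : y * r ∈ J
    · exact Or.inr ⟨r, hr, hyr⟩
    · exact Or.inl ⟨y * r, hyr, by rwa [← mul_assoc]⟩

end Helpers

section Main
variable {R : Type*} [CommRing R] [IsDomain R]

/-- the main identity: `J_K = (J·K)R_p ∩ R` for any prime `p ⊇ J^#` -/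
lemma part1 (hR : IsArithmetical R) (J : Ideal R) (hJ : IsWeaklyPrime J)
    (K : Ideal R) (hKfg : K.FG) (hK : K ≠ ⊥) (p : Ideal R) [hp : p.IsPrime]
    (hsub : {a : R | ∃ r ∉ J, a * r ∈ J} ⊆ ↑p) :
    {a : R | (Ideal.span {a}).colon K ≤ J} = ↑(locContract (J * K) p hp) := by
  have h1J : (1 : R) ∉ J := (Ideal.ne_top_iff_one J).mp hJ.1
  have hJp : J ≤ p := fun a ha => hsub ⟨1, h1J, by rwa [mul_one]⟩
  have sat : ∀ s ∉ p, ∀ y, s * y ∈ J → y ∈ J := by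
    intro s hs y hsy
    by_contra hy
    exact hs (hsub ⟨y, hy, hsy⟩)
  -- the local generator of K
  rcases mapPrincipal hR p hKfg with h | ⟨k, hkK, hKmap⟩
  · exact absurd h hK
  have hkdvd : ∀ c ∈ K, ∃ s ∉ p, ∃ x, s * c = k * x := by
    intro c hc
    refine dvdDown p ?_
    rw [← Ideal.mem_span_singleton, ← hKmap]
    exact Ideal.mem_map_of_mem _ hc
  obtain ⟨S, hSp, hS⟩ := clearDenom p hKfg hkdvd
  have hfk : algebraMap R (Localization.AtPrime p) k ≠ 0 := by
    intro h0
    obtain ⟨k0, hk0K, hk0⟩ := Submodule.exists_mem_ne_zero_of_ne_bot hK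
    have : algebraMap R (Localization.AtPrime p) k0 ∈
        K.map (algebraMap R (Localization.AtPrime p)) := Ideal.mem_map_of_mem _ hk0K
    rw [hKmap, h0, Ideal.span_singleton_eq_bot.mpr rfl, Ideal.mem_bot] at this
    exact hk0 (by
      have hinj := IsLocalization.injective (Localization.AtPrime p)
        p.primeCompl_le_nonZeroDivisors
      exact hinj (by rw [this, map_zero]))
  ext a
  simp only [Set.mem_setOf_eq, SetLike.mem_coe, locContract, Ideal.mem_comap, memMapIff]
  constructor
  · -- J_K ⊆ contraction
    intro hcolon
    rcases dvdTotal hR p k a with hka | hak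
    · obtain ⟨s', hs', x', hx'⟩ := dvdDown p hka
      have hSx' : S * x' ∈ J := by
        refine hcolon ?_
        rw [Submodule.mem_colon]
        intro c hc
        obtain ⟨y, hy⟩ := Ideal.mem_span_singleton.mp (hS c hc)
        rw [smul_eq_mul, Ideal.mem_span_singleton]
        refine ⟨s' * y, ?_⟩
        linear_combination x' * hy - y * hx'
      refine ⟨S * s', fun hc => (by
          rcases hp.mem_or_mem hc with h | h
          exacts [hSp h, hs' h] : False), ?_⟩
      have : S * s' * a = (S * x') * k := by linear_combination S * hx'
      rw [this]
      exact Ideal.mul_mem_mul hSx' hkK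
    · obtain ⟨s0, hs0, x0, hx0⟩ := dvdDown p hak
      exfalso
      have hSs0 : S * s0 ∈ J := by
        refine hcolon ?_
        rw [Submodule.mem_colon]
        intro c hc
        obtain ⟨y, hy⟩ := Ideal.mem_span_singleton.mp (hS c hc)
        rw [smul_eq_mul, Ideal.mem_span_singleton]
        refine ⟨x0 * y, ?_⟩
        linear_combination s0 * hy + y * hx0
      have : S * s0 ∈ p := hJp hSs0
      rcases hp.mem_or_mem this with h | h
      exacts [hSp h, hs0 h]
  · -- contraction ⊆ J_K
    rintro ⟨s, hsp, hsa⟩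
    intro b hb
    rw [Submodule.mem_colon] at hb
    have hbk : b * k ∈ Ideal.span {a} := by
      have := hb k hkK
      rwa [smul_eq_mul] at this
    obtain ⟨y, hy⟩ := Ideal.mem_span_singleton.mp hbk
    -- b * s * k = (s * a) * y ∈ J * K
    have hmem : b * s * k ∈ J * K := by
      have : b * s * k = (s * a) * y := by linear_combination s * hy
      rw [this]
      exact Ideal.mul_mem_right y _ hsa
    have hfmem : algebraMap R (Localization.AtPrime p) (b * s * k) ∈
        (J * K).map (algebraMap R (Localization.AtPrime p)) := Ideal.mem_map_of_mem _ hmem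
    rw [Ideal.map_mul, hKmap, Ideal.mem_mul_span_singleton] at hfmem
    obtain ⟨j', hj', hjk⟩ := hfmem
    have hbs : algebraMap R (Localization.AtPrime p) (b * s) ∈
        J.map (algebraMap R (Localization.AtPrime p)) := by
      have : j' * algebraMap R (Localization.AtPrime p) k =
          algebraMap R (Localization.AtPrime p) (b * s) *
            algebraMap R (Localization.AtPrime p) k := by
        rw [hjk, map_mul, map_mul]
      have := mul_right_cancel₀ hfk this
      rwa [← this]
    rw [memMapIff] at hbs
    obtain ⟨t, htp, htbs⟩ := hbs
    have : (t * s) * b ∈ J := by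
      have : (t * s) * b = t * (b * s) := by ring
      rwa [this]
    refine sat (t * s) (fun hc => ?_) b this
    rcases hp.mem_or_mem hc with h | h
    exacts [htp h, hsp h]

end Main

/-- Let `R` be a Prüfer domain, `J` a weakly prime ideal, `K` a nonzero finitely generated
ideal and `J_K := {a | (aR : K) ⊆ J}`.  Then for every prime `p ⊇ J^#` we have
`J_K = (J·K)·R_p ∩ R`; consequently `J_K` is a weakly prime ideal and `(J_K)^# = J^#`. -/
theorem stmt4 {R : Type*} [CommRing R] [IsDomain R] (hR : IsArithmetical R)
    (J : Ideal R) (hJ : IsWeaklyPrime J)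
    (K : Ideal R) (hKfg : K.FG) (hK : K ≠ ⊥) :
    (∀ (p : Ideal R) (hp : p.IsPrime), {a : R | ∃ r ∉ J, a * r ∈ J} ⊆ ↑p →
      {a : R | (Ideal.span {a}).colon K ≤ J} = ↑(locContract (J * K) p hp)) ∧
    (∃ JK : Ideal R, (JK : Set R) = {a : R | (Ideal.span {a}).colon K ≤ J} ∧
      IsWeaklyPrime JK ∧
      {a : R | ∃ r ∉ JK, a * r ∈ JK} = {a : R | ∃ r ∉ J, a * r ∈ J}) := by
  have h1J : (1 : R) ∉ J := (Ideal.ne_top_iff_one J).mp hJ.1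
  refine ⟨fun p hp hsub => part1 hR J hJ K hKfg hK p (hp := hp) hsub, ?_⟩
  obtain ⟨q, hqcar, hqprime⟩ := sharpPrime J hJ
  haveI := hqprime
  have hsubq : {a : R | ∃ r ∉ J, a * r ∈ J} ⊆ ↑q := hqcar.superset
  set JK : Ideal R := locContract (J * K) q hqprime with hJKdef
  have hcar : (JK : Set R) = {a : R | (Ideal.span {a}).colon K ≤ J} :=
    (part1 hR J hJ K hKfg hK q (hp := hqprime) hsubq).symm
  have hmemJK : ∀ a : R, a ∈ JK ↔ ∃ s ∉ q, s * a ∈ J * K := by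
    intro a
    rw [hJKdef]
    simp only [locContract, Ideal.mem_comap, memMapIff]
  have hmemJK' : ∀ a : R, a ∈ JK ↔ (Ideal.span {a}).colon K ≤ J := by
    intro a
    have := Set.ext_iff.mp hcar a
    simpa using this
  have hJKtop : JK ≠ ⊤ := by
    rw [Ideal.ne_top_iff_one]
    intro h1
    have := (hmemJK' 1).mp h1
    have h1c : (1 : R) ∈ (Ideal.span {(1 : R)}).colon K := by
      rw [Submodule.mem_colon]
      intro c hc
      rw [smul_eq_mul, Ideal.mem_span_singleton]
      exact ⟨c, rfl⟩
    exact h1J (this h1c)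
  -- key sublemma for weak primality
  have sub : ∀ A B : Ideal R,
      B.map (algebraMap R (Localization.AtPrime q)) ≤
        A.map (algebraMap R (Localization.AtPrime q)) → A ⊓ B ≤ JK → B ≤ JK := by
    intro A B hle hAB x hx
    have hfx : algebraMap R (Localization.AtPrime q) x ∈
        A.map (algebraMap R (Localization.AtPrime q)) := hle (Ideal.mem_map_of_mem _ hx)
    rw [memMapIff] at hfx
    obtain ⟨s, hsq, hsx⟩ := hfx
    have : s * x ∈ JK := hAB ⟨hsx, B.mul_mem_left s hx⟩
    rw [hmemJK] at this ⊢
    obtain ⟨t, htq, hts⟩ := this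
    refine ⟨t * s, fun hc => ?_, by rwa [mul_assoc]⟩
    rcases hqprime.mem_or_mem hc with h | h
    exacts [htq h, hsq h]
  refine ⟨JK, hcar, ⟨hJKtop, ?_⟩, ?_⟩
  · intro A B hAfg hBfg hAB
    rcases mapPrincipal hR q hAfg with rfl | ⟨a0, ha0A, hAmap⟩
    · exact Or.inl bot_le
    rcases mapPrincipal hR q hBfg with rfl | ⟨b0, hb0B, hBmap⟩
    · exact Or.inr bot_le
    rcases dvdTotal hR q a0 b0 with h | h
    · refine Or.inr (sub A B ?_ hAB)
      rw [hAmap, hBmap]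
      exact Ideal.span_le.mpr (Set.singleton_subset_iff.mpr (Ideal.mem_span_singleton.mpr h))
    · refine Or.inl (sub B A ?_ (by rwa [inf_comm]))
      rw [hAmap, hBmap]
      exact Ideal.span_le.mpr (Set.singleton_subset_iff.mpr (Ideal.mem_span_singleton.mpr h))
  · -- JK^# = J^#
    ext a
    simp only [Set.mem_setOf_eq]
    constructor
    · rintro ⟨r, hrn, harm⟩
      rw [hmemJK'] at hrn
      obtain ⟨c, hcc, hcJ⟩ := SetLike.not_le_iff_exists.mp hrn
      rw [hmemJK'] at harm
      have hacc : a * c ∈ (Ideal.span {a * r}).colon K := by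
        rw [Submodule.mem_colon]
        intro d hd
        have hcd : c * d ∈ Ideal.span {r} := by
          have := Submodule.mem_colon.mp hcc d hd
          rwa [smul_eq_mul] at this
        obtain ⟨w, hw⟩ := Ideal.mem_span_singleton.mp hcd
        rw [smul_eq_mul, Ideal.mem_span_singleton]
        exact ⟨w, by linear_combination a * hw⟩
      exact ⟨c, hcJ, harm hacc⟩
    · rintro ⟨t, htn, hat⟩
      rcases mapPrincipal hR q hKfg with h | ⟨k, hkK, hKmap⟩
      · exact absurd h hK
      have hkdvd : ∀ c ∈ K, ∃ s ∉ q, ∃ x, s * c = k * x := by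
        intro c hc
        refine dvdDown q ?_
        rw [← Ideal.mem_span_singleton, ← hKmap]
        exact Ideal.mem_map_of_mem _ hc
      obtain ⟨S, hSq, hS⟩ := clearDenom q hKfg hkdvd
      refine ⟨t * k, ?_, ?_⟩
      · rw [hmemJK']
        intro hle
        have hStk : S * t ∈ (Ideal.span {t * k}).colon K := by
          rw [Submodule.mem_colon]
          intro c hc
          obtain ⟨y, hy⟩ := Ideal.mem_span_singleton.mp (hS c hc)
          rw [smul_eq_mul, Ideal.mem_span_singleton]
          exact ⟨y, by linear_combination t * hy⟩
        have hStJ : S * t ∈ J := hle hStk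
        have : S ∈ ({a : R | ∃ r ∉ J, a * r ∈ J} : Set R) := ⟨t, htn, hStJ⟩
        exact hSq (hsubq this)
      · have : a * (t * k) ∈ J * K := by
          have : a * (t * k) = (a * t) * k := by ring
          rw [this]
          exact Ideal.mul_mem_mul hat hkK
        exact Ideal.le_comap_map this
end

section
/- Let R be a Prüfer domain, J a weakly prime ideal of R, and K a nonzero finitely generated ideal of R. Then (J_K : K) = J, where J_K := {a ∈ R : (aR : K) ⊆ J}. Moreover, if K ⊄ J, then (J : K)_K = J, i.e., {a ∈ R : (aR : K) ⊆ (J : K)} = J. -/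
lemma exists_max_ideal {α : Type*} {L : Type*} [CommRing L]
    (tot : ∀ I J : Ideal L, I ≤ J ∨ J ≤ I) (f : α → Ideal L) (s : Finset α)
    (hs : s.Nonempty) : ∃ j ∈ s, ∀ i ∈ s, f i ≤ f j := by
  classical
  induction s using Finset.induction with
  | empty => exact absurd hs (by simp)
  | @insert a t ha ih =>
    rcases t.eq_empty_or_nonempty with h0 | h0
    · subst h0
      refine ⟨a, Finset.mem_insert_self _ _, ?_⟩
      intro i hi
      rcases Finset.mem_insert.1 hi with rfl | hi
      · exact le_rfl
      · simp at hi
    · obtain ⟨j, hj, hmax⟩ := ih h0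
      rcases tot (f a) (f j) with h | h
      · refine ⟨j, Finset.mem_insert_of_mem hj, ?_⟩
        intro i hi
        rcases Finset.mem_insert.1 hi with rfl | hi
        · exact h
        · exact hmax i hi
      · refine ⟨a, Finset.mem_insert_self _ _, ?_⟩
        intro i hi
        rcases Finset.mem_insert.1 hi with rfl | hi
        · exact le_rfl
        · exact (hmax i hi).trans h

/-- In an arithmetical ring, a finitely generated ideal is locally principal:
the colon ideals of the generators sum to the whole ring. -/
lemma arith_colon_top {R : Type*} [CommRing R] (hR : IsArithmetical R)
    (s : Finset R) (hs : s.Nonempty) :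
    (⨆ k ∈ s, (Ideal.span {k}).colon (Ideal.span (s : Set R))) = ⊤ := by
  classical
  by_contra h
  obtain ⟨m, hm, hIm⟩ := Ideal.exists_le_maximal _ h
  haveI := hm
  set L := Localization.AtPrime m with hL
  set φ := algebraMap R L with hφ
  obtain ⟨j, hj, hmax⟩ := exists_max_ideal (hR m) (fun i => Ideal.span {φ i}) s hs
  have pull : ∀ i ∈ s, ∃ u : R, u ∉ m ∧ u * i ∈ Ideal.span {j} := by
    intro i hi
    have h1 : φ i ∈ Ideal.span {φ j} :=
      hmax i hi (Ideal.mem_span_singleton_self _)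
    have h2 : φ i ∈ Ideal.map φ (Ideal.span {j}) := by
      rw [Ideal.map_span, Set.image_singleton]; exact h1
    rw [IsLocalization.mem_map_algebraMap_iff m.primeCompl] at h2
    obtain ⟨⟨x, t⟩, hxt⟩ := h2
    have heq : φ (i * (t : R)) = φ (x : R) := by
      rw [map_mul]; exact hxt
    obtain ⟨c, hc⟩ := IsLocalization.exists_of_eq (M := m.primeCompl) (S := L) heq
    refine ⟨(c : R) * (t : R), ?_, ?_⟩
    · exact (c * t).2
    · have : (c : R) * (t : R) * i = (c : R) * (x : R) := by
        linear_combination hc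
      rw [this]
      exact Ideal.mul_mem_left _ _ x.2
  have pull' : ∀ i : R, ∃ u : R, i ∈ s → u ∉ m ∧ u * i ∈ Ideal.span {j} := by
    intro i
    by_cases hi : i ∈ s
    · obtain ⟨u, h1, h2⟩ := pull i hi
      exact ⟨u, fun _ => ⟨h1, h2⟩⟩
    · exact ⟨1, fun h' => absurd h' hi⟩
  choose u hu using pull'
  set U := ∏ i ∈ s, u i with hU
  have hUm : U ∉ m := by
    have : U ∈ m.primeCompl := Submonoid.prod_mem _ (fun i hi => (hu i hi).1)
    exact this
  have hUc : U ∈ (Ideal.span {j}).colon (Ideal.span (s : Set R)) := by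
    rw [Submodule.mem_colon]
    intro p hp
    induction hp using Submodule.span_induction with
    | mem p hp =>
      have h1 : (∏ i ∈ s.erase p, u i) * u p = U := Finset.prod_erase_mul s u hp
      have h2 : U • p = (∏ i ∈ s.erase p, u i) * (u p * p) := by
        rw [smul_eq_mul, ← h1]; ring
      rw [h2]
      exact Ideal.mul_mem_left _ _ (hu p hp).2
    | zero => simp
    | add x y _ _ hx hy => rw [smul_add]; exact Ideal.add_mem _ hx hy
    | smul a x _ hx =>
      rw [smul_comm]
      exact Ideal.mul_mem_left _ _ hx
  have : U ∈ m := hIm (le_iSup₂ (f := fun k (_ : k ∈ s) =>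
    (Ideal.span {k}).colon (Ideal.span (s : Set R))) j hj hUc)
  exact hUm this

/-- Let `R` be a Prüfer domain, `J` a weakly prime ideal and `K` a nonzero finitely generated
ideal.  Then `(J_K : K) = J`, where `J_K = {a | (aR : K) ⊆ J}`; concretely,
`x ∈ (J_K : K)` iff `x·k ∈ J_K` for all `k ∈ K`.  Moreover, if `K ⊄ J`, then
`(J : K)_K = J`, i.e. `{a | (aR : K) ⊆ (J : K)} = J`. -/
theorem stmt5 {R : Type*} [CommRing R] [IsDomain R] (hR : IsArithmetical R)
    (J : Ideal R) (hJ : IsWeaklyPrime J)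
    (K : Ideal R) (hKfg : K.FG) (hK : K ≠ ⊥) :
    ({x : R | ∀ k ∈ K, (Ideal.span {x * k}).colon K ≤ J} = (J : Set R)) ∧
    (¬ K ≤ J → {a : R | (Ideal.span {a}).colon K ≤ J.colon K} = (J : Set R)) := by
  classical
  obtain ⟨s, hsK⟩ := hKfg
  have hsne : s.Nonempty := by
    rcases s.eq_empty_or_nonempty with h | h
    · exfalso; apply hK; rw [← hsK, h]; simp
    · exact h
  have hI : (⨆ k ∈ s, (Ideal.span {k}).colon K) = ⊤ := by
    have := arith_colon_top hR s hsne
    rwa [hsK] at this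
  obtain ⟨k₀, hk₀K, hk₀⟩ := (Submodule.ne_bot_iff K).1 hK
  -- decomposition principle
  have key : ∀ (x : R) (J' : Ideal R),
      (∀ k ∈ s, ∀ c ∈ (Ideal.span {k}).colon K, x * c ∈ J') → x ∈ J' := by
    intro x J' hx
    have h1 : (1 : R) ∈ (⨆ k ∈ s, (Ideal.span {k}).colon K) := by
      rw [hI]; exact Submodule.mem_top
    have h2 : x * 1 ∈ J' := by
      refine Submodule.iSup_induction
        (motive := fun c => x * c ∈ J') _ h1 ?_ ?_ ?_
      · intro k c hc
        by_cases hk : k ∈ s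
        · rw [iSup_pos hk] at hc
          exact hx k hk c hc
        · rw [iSup_neg hk] at hc
          simp only [Submodule.mem_bot] at hc
          rw [hc, mul_zero]; exact J'.zero_mem
      · show x * 0 ∈ J'
        rw [mul_zero]; exact J'.zero_mem
      · intro y z hy hz
        show x * (y + z) ∈ J'
        rw [mul_add]; exact J'.add_mem hy hz
    simpa using h2
  have hgen : ∀ k ∈ s, k ∈ K := fun k hk => hsK ▸ Ideal.subset_span hk
  constructor
  · ext x
    simp only [Set.mem_setOf_eq, SetLike.mem_coe]
    constructor
    · intro hx
      apply key x J
      intro k hk c hc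
      apply hx k (hgen k hk)
      rw [Submodule.mem_colon]
      intro p hp
      have hcp : c * p ∈ Ideal.span {k} := by
        have := Submodule.mem_colon.mp hc p hp
        rwa [smul_eq_mul] at this
      obtain ⟨f, hf⟩ := Ideal.mem_span_singleton'.mp hcp
      rw [smul_eq_mul, Ideal.mem_span_singleton']
      exact ⟨f, by linear_combination x * hf⟩
    · intro hxJ k hkK b hb
      by_cases hk0 : k = 0
      · have h1 := Submodule.mem_colon.mp hb k₀ hk₀K
        rw [smul_eq_mul, hk0, mul_zero, Ideal.span_singleton_eq_bot.mpr rfl,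
          Submodule.mem_bot] at h1
        rcases mul_eq_zero.mp h1 with rfl | h2
        · exact J.zero_mem
        · exact absurd h2 hk₀
      · have hbk := Submodule.mem_colon.mp hb k hkK
        rw [smul_eq_mul] at hbk
        obtain ⟨c, hc⟩ := Ideal.mem_span_singleton'.mp hbk
        have hbc : b = c * x := by
          apply mul_right_cancel₀ hk0
          linear_combination -hc
        rw [hbc]
        exact J.mul_mem_left c hxJ
  · intro hKJ
    ext a
    simp only [Set.mem_setOf_eq, SetLike.mem_coe]
    constructor
    · intro ha
      have hstep : Ideal.span {a} ⊓ K ≤ J := by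
        intro t ht
        obtain ⟨htA, htK⟩ := ht
        obtain ⟨g, hg⟩ := Ideal.mem_span_singleton'.mp htA
        apply key t J
        intro k hk c hc
        by_cases hk0 : k = 0
        · have h1 := Submodule.mem_colon.mp hc k₀ hk₀K
          rw [smul_eq_mul, hk0, Ideal.span_singleton_eq_bot.mpr rfl,
            Submodule.mem_bot] at h1
          rcases mul_eq_zero.mp h1 with rfl | h2
          · rw [mul_zero]; exact J.zero_mem
          · exact absurd h2 hk₀
        · have hct : c * t ∈ Ideal.span {k} := by
            have := Submodule.mem_colon.mp hc t htK
            rwa [smul_eq_mul] at this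
          obtain ⟨e, he⟩ := Ideal.mem_span_singleton'.mp hct
          have heC : e ∈ (Ideal.span {a}).colon K := by
            rw [Submodule.mem_colon]
            intro p hp
            have hcp : c * p ∈ Ideal.span {k} := by
              have := Submodule.mem_colon.mp hc p hp
              rwa [smul_eq_mul] at this
            obtain ⟨f, hf⟩ := Ideal.mem_span_singleton'.mp hcp
            have hep : e * p = f * t := by
              apply mul_right_cancel₀ hk0
              calc e * p * k = (e * k) * p := by ring
                _ = (c * t) * p := by rw [he]
                _ = (c * p) * t := by ring
                _ = (f * k) * t := by rw [hf]
                _ = f * t * k := by ring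
            rw [smul_eq_mul, Ideal.mem_span_singleton']
            exact ⟨f * g, by linear_combination f * hg - hep⟩
          have heJ : e ∈ J.colon K := ha heC
          have hek : e * k ∈ J := by
            have := Submodule.mem_colon.mp heJ k (hgen k hk)
            rwa [smul_eq_mul] at this
          have : t * c = e * k := by rw [he]; ring
          rw [this]; exact hek
      rcases hJ.2 (Ideal.span {a}) K ⟨{a}, by simp⟩ ⟨s, hsK⟩ hstep with h | h
      · exact h (Ideal.mem_span_singleton_self a)
      · exact absurd h hKJ
    · intro haJ b hb
      rw [Submodule.mem_colon] at hb ⊢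
      intro p hp
      have := hb p hp
      rw [smul_eq_mul] at this ⊢
      exact (Ideal.span_singleton_le_iff_mem J).mpr haJ this
end

section
/- Let R be a Prüfer domain and A, B, C, D finitely generated ideals of R. Then A·C ⊆ A·B + C·D if and only if (B : C) + (D : A) = R. -/
/-- In a ring whose ideals are totally ordered, every finitely generated ideal is principal. -/
lemma fg_principal_of_chain {S : Type*} [CommRing S]
    (hS : ∀ I J : Ideal S, I ≤ J ∨ J ≤ I) {I : Ideal S} (hI : I.FG) :
    ∃ a : S, I = Ideal.span {a} := by
  obtain ⟨s, rfl⟩ := hI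
  classical
  induction s using Finset.induction_on with
  | empty => exact ⟨0, by rw [Finset.coe_empty, Ideal.span_empty, Ideal.span_singleton_eq_bot.mpr rfl]⟩
  | @insert a t _ ih =>
    obtain ⟨b, hb⟩ := ih
    rw [Finset.coe_insert, Ideal.span_insert, hb]
    rcases hS (Ideal.span {a}) (Ideal.span {b}) with h | h
    · exact ⟨b, by rw [sup_eq_right.mpr h]⟩
    · exact ⟨a, by rw [sup_eq_left.mpr h]⟩

/-- The key local lemma, in a local domain with totally ordered ideals. -/
lemma local_key {S : Type*} [CommRing S] [IsLocalRing S] [IsDomain S]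
    (hS : ∀ I J : Ideal S, I ≤ J ∨ J ≤ I) (a c : S) (B D : Ideal S)
    (h : Ideal.span {a} * Ideal.span {c} ≤ Ideal.span {a} * B + Ideal.span {c} * D) :
    c ∈ B ∨ a ∈ D := by
  have hac : a * c ∈ Ideal.span {a} * B + Ideal.span {c} * D :=
    h (Ideal.mul_mem_mul (Ideal.mem_span_singleton_self a) (Ideal.mem_span_singleton_self c))
  rw [Ideal.add_eq_sup] at hac
  obtain ⟨x, hx, y, hy, hxy⟩ := Submodule.mem_sup.mp hac
  obtain ⟨b, hb, rfl⟩ := Submodule.mem_span_singleton_mul.mp hx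
  obtain ⟨d, hd, rfl⟩ := Submodule.mem_span_singleton_mul.mp hy
  rcases hS (Ideal.span {c}) (Ideal.span {b}) with hcb | hbc
  · -- b divides c, so c ∈ B
    obtain ⟨k, rfl⟩ := Ideal.span_singleton_le_span_singleton.mp hcb
    exact Or.inl (B.mul_mem_right k hb)
  · -- c divides b
    obtain ⟨e, rfl⟩ := Ideal.span_singleton_le_span_singleton.mp hbc
    rcases eq_or_ne c 0 with rfl | hc0
    · exact Or.inl B.zero_mem
    · have key : a * (1 - e) = d := by
        have : c * (a * (1 - e)) = c * d := by linear_combination -hxy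
        exact mul_left_cancel₀ hc0 this
      rcases IsLocalRing.isUnit_or_isUnit_one_sub_self e with he | he
      · obtain ⟨u, rfl⟩ := he
        have : c = c * u * (u⁻¹ : Sˣ) := by
          rw [mul_assoc, ← Units.val_mul, mul_inv_cancel, Units.val_one, mul_one]
        exact Or.inl (this ▸ B.mul_mem_right _ hb)
      · obtain ⟨u, hu⟩ := he
        have : a = d * (u⁻¹ : Sˣ) := by
          rw [← key, ← hu, mul_assoc, ← Units.val_mul, mul_inv_cancel, Units.val_one, mul_one]
        exact Or.inr (this ▸ D.mul_mem_right _ hd)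

lemma finset_clear {R : Type*} [CommRing R] (M : Submonoid R) (B : Ideal R) (t : Finset R)
    (h : ∀ x ∈ t, ∃ s ∈ M, s * x ∈ B) : ∃ u ∈ M, ∀ x ∈ t, u * x ∈ B := by
  classical
  induction t using Finset.induction_on with
  | empty => exact ⟨1, M.one_mem, by simp⟩
  | @insert a t _ ih =>
    obtain ⟨s, hsM, hsB⟩ := h a (Finset.mem_insert_self a t)
    obtain ⟨u, huM, huB⟩ := ih fun x hx => h x (Finset.mem_insert_of_mem hx)
    refine ⟨s * u, M.mul_mem hsM huM, fun x hxt => ?_⟩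
    rcases Finset.mem_insert.mp hxt with rfl | hxt
    · have : s * u * x = u * (s * x) := by ring
      exact this ▸ B.mul_mem_left u hsB
    · have : s * u * x = s * (u * x) := by ring
      exact this ▸ B.mul_mem_left s (huB x hxt)

/-- If the localization of `C` at a prime `m` is contained in that of `B` and `C` is f.g.,
then some `s ∉ m` lies in `B.colon C`. -/
lemma clear_denominators {R : Type*} [CommRing R] (m : Ideal R) [m.IsPrime]
    (B C : Ideal R) (hC : C.FG)
    (h : Ideal.map (algebraMap R (Localization.AtPrime m)) C ≤
      Ideal.map (algebraMap R (Localization.AtPrime m)) B) :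
    ∃ s ∈ m.primeCompl, s ∈ B.colon C := by
  obtain ⟨t, rfl⟩ := hC
  have key : ∀ x ∈ t, ∃ s ∈ m.primeCompl, s * x ∈ B := by
    intro x hxt
    have hx : algebraMap R (Localization.AtPrime m) x ∈
        Ideal.map (algebraMap R (Localization.AtPrime m)) B :=
      h (Ideal.mem_map_of_mem _ (Ideal.subset_span hxt))
    rw [← IsLocalization.mk'_one (M := m.primeCompl) (Localization.AtPrime m) x,
      IsLocalization.mk'_mem_map_algebraMap_iff m.primeCompl] at hx
    exact hx
  obtain ⟨u, huM, huB⟩ := finset_clear m.primeCompl B t key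
  refine ⟨u, huM, ?_⟩
  rw [Submodule.mem_colon']
  rw [SetLike.coe_subset_coe, Ideal.span_le]
  intro x hxt
  simpa using huB x hxt

/-- Let `R` be a Prüfer domain and `A, B, C, D` finitely generated ideals of `R`.  Then
`A·C ⊆ A·B + C·D` if and only if `(B : C) + (D : A) = R`. -/
theorem stmt10 {R : Type*} [CommRing R] [IsDomain R] (hR : IsArithmetical R)
    (A B C D : Ideal R) (hA : A.FG) (hB : B.FG) (hC : C.FG) (hD : D.FG) :
    A * C ≤ A * B + C * D ↔ B.colon C + D.colon A = ⊤ := by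
  constructor
  · intro h
    by_contra hne
    obtain ⟨m, hm, hle⟩ := Ideal.exists_le_maximal _ hne
    have hBC : B.colon C ≤ m := le_trans le_sup_left hle
    have hDA : D.colon A ≤ m := le_trans le_sup_right hle
    have hchain := hR m
    set f := algebraMap R (Localization.AtPrime m) with hf
    obtain ⟨a, ha⟩ := fg_principal_of_chain hchain (hA.map f)
    obtain ⟨c, hc⟩ := fg_principal_of_chain hchain (hC.map f)
    have hmap : Ideal.map f (A * C) ≤ Ideal.map f (A * B + C * D) := Ideal.map_mono h
    rw [Ideal.map_mul, Ideal.add_eq_sup, Ideal.map_sup, Ideal.map_mul, Ideal.map_mul, ha, hc]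
      at hmap
    rw [← Ideal.add_eq_sup] at hmap
    rcases local_key hchain a c _ _ hmap with h1 | h1
    · have hCB : Ideal.map f C ≤ Ideal.map f B := by
        rw [hc, Ideal.span_le, Set.singleton_subset_iff]; exact h1
      obtain ⟨s, hs, hscolon⟩ := clear_denominators m B C hC hCB
      exact hs (hBC hscolon)
    · have hAD : Ideal.map f A ≤ Ideal.map f D := by
        rw [ha, Ideal.span_le, Set.singleton_subset_iff]; exact h1
      obtain ⟨s, hs, hscolon⟩ := clear_denominators m D A hA hAD
      exact hs (hDA hscolon)
  · intro h
    have h1 : (1 : R) ∈ B.colon C + D.colon A := h ▸ Submodule.mem_top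
    rw [Ideal.add_eq_sup] at h1
    obtain ⟨x, hx, y, hy, hxy⟩ := Submodule.mem_sup.mp h1
    refine Ideal.mul_le.mpr fun r hr s hs => ?_
    have hxb : x * s ∈ B := by simpa using Submodule.mem_colon.mp hx s hs
    have hyd : y * r ∈ D := by simpa using Submodule.mem_colon.mp hy r hr
    have : r * s = r * (x * s) + s * (y * r) := by
      linear_combination (-(r * s)) * hxy
    rw [this, Ideal.add_eq_sup]
    exact Submodule.add_mem_sup (Ideal.mul_mem_mul hr hxb) (Ideal.mul_mem_mul hs hyd)
end

section
/- Let R be an arithmetical ring and A, B finitely generated ideals of R. Then (A·B : B) = A + (0 : B), where (0 : B) = {a ∈ R : aB = 0} is the annihilator of B. -/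
/-- In a ring with totally ordered ideal lattice, every f.g. ideal is principal. -/
lemma fg_principal {S : Type*} [CommRing S]
    (h : ∀ I J : Ideal S, I ≤ J ∨ J ≤ I) {I : Ideal S} (hI : I.FG) :
    ∃ a : S, I = Ideal.span {a} := by
  classical
  obtain ⟨s, rfl⟩ := hI
  induction s using Finset.induction_on with
  | empty =>
    exact ⟨0, by rw [Finset.coe_empty, Ideal.span_empty, Ideal.span_singleton_eq_bot.mpr rfl]⟩
  | @insert b t hbt ih =>
    obtain ⟨a, ha⟩ := ih
    rw [Finset.coe_insert, Ideal.span_insert, ha]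
    rcases h (Ideal.span {b}) (Ideal.span {a}) with hle | hle
    · exact ⟨a, sup_eq_right.mpr hle⟩
    · exact ⟨b, sup_eq_left.mpr hle⟩

/-- Uniformize the annihilating elements over a finite set. -/
lemma exists_uniform_kill {R : Type*} [CommRing R] (S : Submonoid R) (t : Finset R) (z : R)
    (h : ∀ b ∈ t, ∃ c : S, (c : R) * (z * b) = 0) :
    ∃ c : S, ∀ b ∈ t, (c : R) * (z * b) = 0 := by
  classical
  induction t using Finset.induction_on with
  | empty => exact ⟨1, by simp⟩
  | @insert a t hat ih =>
    obtain ⟨c, hc⟩ := ih (fun b hb => h b (Finset.mem_insert_of_mem hb))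
    obtain ⟨d, hd⟩ := h a (Finset.mem_insert_self a t)
    refine ⟨c * d, fun b hbm => ?_⟩
    rcases Finset.mem_insert.mp hbm with rfl | hbt
    · push_cast; linear_combination (c : R) * hd
    · push_cast; linear_combination (d : R) * hc b hbt

/-- For a f.g. ideal `B`, the annihilator of the localized ideal is contained in the
localization of the annihilator. -/
lemma ann_map_le {R : Type*} [CommRing R] (P : Ideal R) [P.IsMaximal] {B : Ideal R} (hB : B.FG) :
    (⊥ : Ideal (Localization.AtPrime P)).colon
        (B.map (algebraMap R (Localization.AtPrime P))) ≤
      ((⊥ : Ideal R).colon B).map (algebraMap R (Localization.AtPrime P)) := by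
  obtain ⟨t, htB⟩ := hB
  intro z' hz'
  obtain ⟨⟨z, s⟩, rfl⟩ := IsLocalization.mk'_surjective P.primeCompl z'
  have h1 : ∀ b ∈ t, ∃ c : P.primeCompl, (c : R) * (z * b) = 0 := by
    intro b hb
    have hbB : b ∈ B := htB ▸ Ideal.subset_span hb
    have h2 := Submodule.mem_colon.mp hz' _ (Ideal.mem_map_of_mem _ hbB)
    rw [smul_eq_mul, Submodule.mem_bot] at h2
    have h3 : algebraMap R (Localization.AtPrime P) (z * b) =
        algebraMap R (Localization.AtPrime P) 0 := by
      rw [map_mul, map_zero, ← IsLocalization.mk'_spec (Localization.AtPrime P) z s]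
      rw [mul_comm _ (algebraMap R (Localization.AtPrime P) s), mul_assoc, h2, mul_zero]
    obtain ⟨c, hc⟩ := (IsLocalization.eq_iff_exists P.primeCompl _).mp h3
    exact ⟨c, by simpa using hc⟩
  obtain ⟨c, hc⟩ := exists_uniform_kill P.primeCompl t z h1
  have hcz : z * (c : R) ∈ (⊥ : Ideal R).colon B := by
    rw [Submodule.mem_colon']
    rw [← htB, SetLike.coe_subset_coe, Ideal.span_le]
    intro b hb
    simp only [SetLike.mem_coe, Submodule.mem_comap, LinearMap.smul_apply, LinearMap.id_apply,
      smul_eq_mul, Submodule.mem_bot]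
    linear_combination hc b hb
  have key : IsLocalization.mk' (Localization.AtPrime P) z s =
      IsLocalization.mk' (Localization.AtPrime P) (z * (c : R)) (s * c) :=
    (IsLocalization.mk'_cancel z s c).symm
  dsimp only
  rw [key, IsLocalization.mk'_eq_mul_mk'_one]
  exact Ideal.mul_mem_right _ _ (Ideal.mem_map_of_mem _ hcz)

/-- Let `R` be an arithmetical ring and `A, B` finitely generated ideals of `R`.  Then
`(A·B : B) = A + (0 : B)`, where `(0 : B)` is the annihilator of `B`. -/
theorem stmt11 {R : Type*} [CommRing R] (hR : IsArithmetical R)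
    (A B : Ideal R) (hA : A.FG) (hB : B.FG) :
    (A * B).colon B = A + (⊥ : Ideal R).colon B := by
  refine le_antisymm ?_ ?_
  · -- hard direction
    intro x hx
    apply Ideal.mem_of_localization_maximal
    intro P hP
    set S := Localization.AtPrime P
    set f := algebraMap R S
    obtain ⟨a', ha'⟩ := fg_principal (hR P) (hA.map f)
    obtain ⟨b', hb'⟩ := fg_principal (hR P) (hB.map f)
    -- x • B ≤ A*B, so span{x} * B ≤ A * B
    have hxB : Ideal.span {x} * B ≤ A * B := by
      rw [Ideal.span_singleton_mul_le_iff]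
      intro z hz
      exact Submodule.mem_colon.mp hx z hz
    have hxB' : Ideal.span {f x} * B.map f ≤ A.map f * B.map f := by
      have := Ideal.map_mono (f := f) hxB
      rwa [Ideal.map_mul, Ideal.map_mul, Ideal.map_span, Set.image_singleton] at this
    have hb'mem : b' ∈ B.map f := hb' ▸ Ideal.mem_span_singleton_self b'
    have hxb' : f x * b' ∈ Ideal.span {a' * b'} := by
      have : f x * b' ∈ A.map f * B.map f :=
        hxB' (Ideal.mul_mem_mul (Ideal.mem_span_singleton_self (f x)) hb'mem)
      rwa [ha', hb', Ideal.span_singleton_mul_span_singleton] at this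
    obtain ⟨u, hu⟩ := Ideal.mem_span_singleton'.mp hxb'
    -- f x - u * a' annihilates b'
    have hann : f x - u * a' ∈ (⊥ : Ideal S).colon (B.map f) := by
      rw [Submodule.mem_colon]
      intro p hp
      rw [hb', SetLike.mem_coe, Ideal.mem_span_singleton'] at hp
      obtain ⟨d, rfl⟩ := hp
      rw [smul_eq_mul, Submodule.mem_bot]
      linear_combination (-d) * hu
    have hann' : f x - u * a' ∈ ((⊥ : Ideal R).colon B).map f := ann_map_le P hB hann
    have : f x = u * a' + (f x - u * a') := by ring
    rw [this, Submodule.add_eq_sup, Ideal.map_sup]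
    exact Submodule.add_mem_sup (ha' ▸ Ideal.mul_mem_left _ u (Ideal.mem_span_singleton_self a')) hann'
  · -- easy direction
    apply sup_le
    · intro a ha
      rw [Submodule.mem_colon]
      exact fun b hb => Ideal.mul_mem_mul ha hb
    · intro z hz
      rw [Submodule.mem_colon]
      intro b hb
      have := Submodule.mem_colon.mp hz b hb
      rw [smul_eq_mul, Submodule.mem_bot] at this
      rw [smul_eq_mul, this]
      exact zero_mem _
end

section
/- Let R be a Prüfer domain and A a proper finitely generated ideal of R such that the quotient ring R/A is not a valuation ring, i.e., the ideals of R/A are not totally ordered by inclusion. Then there exist finitely generated ideals B, C of R with A ⊆ B, A ⊆ C, B + C = R, B ⊄ C and C ⊄ B. -/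
/-- If every maximal ideal containing `A` is equal to `m`, then for ideals `I, J ⊇ A`,
comparability after localization at `m` implies comparability. -/
lemma le_of_map_le {R : Type*} [CommRing R] (A : Ideal R) (m : Ideal R) [m.IsMaximal]
    (I J : Ideal R) (hAI : A ≤ I) (hAJ : A ≤ J)
    (h : Ideal.map (algebraMap R (Localization.AtPrime m)) I ≤
         Ideal.map (algebraMap R (Localization.AtPrime m)) J)
    (huniq : ∀ m' : Ideal R, m'.IsMaximal → A ≤ m' → m' = m) : I ≤ J := by
  intro x hx
  have hx' : algebraMap R (Localization.AtPrime m) x ∈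
      Ideal.map (algebraMap R (Localization.AtPrime m)) J := by
    exact h (Ideal.mem_map_of_mem _ hx)
  rw [IsLocalization.mem_map_algebraMap_iff m.primeCompl] at hx'
  obtain ⟨⟨j, s⟩, hjs⟩ := hx'
  rw [← map_mul] at hjs
  obtain ⟨c, hc⟩ := (IsLocalization.eq_iff_exists m.primeCompl _).mp hjs
  have hmem : (↑c * ↑s : R) ∈ J.colon (Ideal.span {x}) := by
    refine Submodule.mem_colon_span_singleton.mpr ?_
    have heq : (↑c * ↑s : R) • x = ↑c * ↑j := by
      rw [smul_eq_mul]; linear_combination hc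
    rw [heq]
    exact J.mul_mem_left _ j.2
  have hcs : (↑c * ↑s : R) ∉ m := (Submonoid.mul_mem _ c.2 s.2 : ↑c * ↑s ∈ m.primeCompl)
  have hAcol : A ≤ J.colon (Ideal.span {x}) := by
    intro a ha
    exact Submodule.mem_colon_span_singleton.mpr (by
      rw [smul_eq_mul]; exact hAJ (A.mul_mem_right x ha))
  have htop : J.colon (Ideal.span {x}) = ⊤ := by
    by_contra hne
    obtain ⟨m', hm', hle⟩ := Ideal.exists_le_maximal _ hne
    have hmm : m' = m := huniq m' hm' (hAcol.trans hle)
    rw [hmm] at hle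
    exact hcs (hle hmem)
  have h1 : (1 : R) ∈ J.colon (Ideal.span {x}) := htop ▸ trivial
  have h2 := Submodule.mem_colon_span_singleton.mp h1
  rwa [one_smul] at h2

/-- Let `R` be a Prüfer domain and `A` a proper finitely generated ideal such that the
ideals of `R/A` are not totally ordered by inclusion.  Then there exist finitely generated
ideals `B, C` containing `A` with `B + C = R` which are incomparable. -/
theorem stmt12 {R : Type*} [CommRing R] [IsDomain R] (hR : IsArithmetical R)
    (A : Ideal R) (hAfg : A.FG) (hA : A ≠ ⊤)
    (hval : ¬ ∀ I J : Ideal (R ⧸ A), I ≤ J ∨ J ≤ I) :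
    ∃ B C : Ideal R, B.FG ∧ C.FG ∧ A ≤ B ∧ A ≤ C ∧ B + C = ⊤ ∧ ¬ B ≤ C ∧ ¬ C ≤ B := by
  -- Step 1: there are two distinct maximal ideals containing A.
  obtain ⟨m₁, hm₁, hAm₁⟩ := Ideal.exists_le_maximal A hA
  have hexists : ∃ m₂ : Ideal R, m₂.IsMaximal ∧ A ≤ m₂ ∧ m₂ ≠ m₁ := by
    by_contra hcon
    push_neg at hcon
    apply hval
    intro Ibar Jbar
    set f := Ideal.Quotient.mk A
    have hfsurj : Function.Surjective f := Ideal.Quotient.mk_surjective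
    set I := Ibar.comap f
    set J := Jbar.comap f
    have hAI : A ≤ I := by
      intro a ha
      simp only [I, Ideal.mem_comap]
      rw [show f a = 0 from Ideal.Quotient.eq_zero_iff_mem.mpr ha]
      exact Ibar.zero_mem
    have hAJ : A ≤ J := by
      intro a ha
      simp only [J, Ideal.mem_comap]
      rw [show f a = 0 from Ideal.Quotient.eq_zero_iff_mem.mpr ha]
      exact Jbar.zero_mem
    have huniq : ∀ m' : Ideal R, m'.IsMaximal → A ≤ m' → m' = m₁ := fun m' h1 h2 =>
      hcon m' h1 h2
    have key : I ≤ J ∨ J ≤ I := by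
      rcases hR m₁ (Ideal.map (algebraMap R (Localization.AtPrime m₁)) I)
          (Ideal.map (algebraMap R (Localization.AtPrime m₁)) J) with h | h
      · exact Or.inl (le_of_map_le A m₁ I J hAI hAJ h huniq)
      · exact Or.inr (le_of_map_le A m₁ J I hAJ hAI h huniq)
    rcases key with h | h
    · left
      rw [← Ideal.map_comap_of_surjective f hfsurj Ibar,
        ← Ideal.map_comap_of_surjective f hfsurj Jbar]
      exact Ideal.map_mono h
    · right
      rw [← Ideal.map_comap_of_surjective f hfsurj Ibar,
        ← Ideal.map_comap_of_surjective f hfsurj Jbar]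
      exact Ideal.map_mono h
  obtain ⟨m₂, hm₂, hAm₂, hne⟩ := hexists
  -- Step 2: construct B and C.
  have hsup : m₁ ⊔ m₂ = ⊤ := by
    by_contra hcon
    have h1 : m₁ ⊔ m₂ = m₁ := by
      rcases hm₁.eq_of_le hcon le_sup_left with h
      · exact h.symm
    exact hne (le_antisymm (h1 ▸ le_sup_right) (by
      by_contra hle
      have h2 : m₁ ⊔ m₂ = m₂ := by
        rcases hm₂.eq_of_le hcon le_sup_right with h
        · exact h.symm
      rw [h1] at h2
      exact hne h2.symm))
  obtain ⟨x, hx₁, hx₂⟩ : ∃ x, x ∈ m₁ ∧ x ∉ m₂ := by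
    by_contra hcon
    push_neg at hcon
    exact hne (hm₁.eq_of_le hm₂.ne_top hcon).symm
  obtain ⟨y, hy₂, hy₁⟩ : ∃ y, y ∈ m₂ ∧ y ∉ m₁ := by
    by_contra hcon
    push_neg at hcon
    exact hne (hm₂.eq_of_le hm₁.ne_top hcon)
  obtain ⟨u, hu, v, hv, huv⟩ := Submodule.mem_sup.mp (hsup ▸ Submodule.mem_top :
    (1 : R) ∈ m₁ ⊔ m₂)
  refine ⟨A ⊔ Ideal.span {x, u}, A ⊔ Ideal.span {y, v}, ?_, ?_, le_sup_left, le_sup_left,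
    ?_, ?_, ?_⟩
  · exact Submodule.FG.sup hAfg (Submodule.fg_span (Set.toFinite _))
  · exact Submodule.FG.sup hAfg (Submodule.fg_span (Set.toFinite _))
  · rw [Submodule.add_eq_sup, Ideal.eq_top_iff_one, ← huv]
    exact Submodule.add_mem _
      (Ideal.mem_sup_left (Ideal.mem_sup_right (Ideal.subset_span (by simp))))
      (Ideal.mem_sup_right (Ideal.mem_sup_right (Ideal.subset_span (by simp))))
  · intro hle
    have hBm : A ⊔ Ideal.span {y, v} ≤ m₂ := by
      refine sup_le hAm₂ ((Ideal.span_le).mpr ?_)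
      rintro z (rfl | rfl)
      · exact hy₂
      · simpa using hv
    exact hx₂ (hBm (hle (Ideal.mem_sup_right (Ideal.subset_span (by simp)))))
  · intro hle
    have hCm : A ⊔ Ideal.span {x, u} ≤ m₁ := by
      refine sup_le hAm₁ ((Ideal.span_le).mpr ?_)
      rintro z (rfl | rfl)
      · exact hx₁
      · simpa using hu
    exact hy₁ (hCm (hle (Ideal.mem_sup_right (Ideal.subset_span (by simp)))))
end

section
/- Let Γ be a lattice-ordered abelian group. Let C be the set of all a ∈ Γ such that for each of e = a⁺ and e = a⁻ there exists a finite chain 0 = c₀ ≤ c₁ ≤ ⋯ ≤ c_n = e in Γ such that each interval [c_i, c_{i+1}] has at most two elements. Then C is a convex ℓ-subgroup of Γ, and the set of nonnegative elements of C is precisely the set of finite sums of elements b ∈ Γ⁺ with [0, b] having at most two elements (i.e., b = 0 or b is an atom of Γ⁺, meaning b > 0 and there is no c with 0 < c < b). -/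
section aux
variable {Γ : Type*} [AddCommGroup Γ] [Lattice Γ] [CovariantClass Γ Γ (· + ·) (· ≤ ·)]

private def TCaux (e : Γ) : Prop := ∃ (n : ℕ) (c : ℕ → Γ), c 0 = 0 ∧ c n = e ∧
  ∀ i < n, c i ≤ c (i + 1) ∧ ∀ x ∈ Set.Icc (c i) (c (i + 1)), x = c i ∨ x = c (i + 1)

private def Atoms (Γ : Type*) [AddCommGroup Γ] [Lattice Γ] : Set Γ :=
  {b : Γ | 0 ≤ b ∧ ∀ x ∈ Set.Icc (0 : Γ) b, x = 0 ∨ x = b}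

private lemma key_hered {s : Γ} (hs : s ∈ AddSubmonoid.closure (Atoms Γ)) :
    0 ≤ s ∧ ∀ x : Γ, 0 ≤ x → x ≤ s → x ∈ AddSubmonoid.closure (Atoms Γ) := by
  induction hs using AddSubmonoid.closure_induction with
  | mem b hb =>
    refine ⟨hb.1, fun x hx0 hxb => ?_⟩
    rcases hb.2 x ⟨hx0, hxb⟩ with h | h
    · simpa [h] using (AddSubmonoid.closure (Atoms Γ)).zero_mem
    · exact h ▸ AddSubmonoid.subset_closure hb
  | zero =>
    exact ⟨le_refl 0, fun x hx0 hx => by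
      simpa [le_antisymm hx hx0] using (AddSubmonoid.closure (Atoms Γ)).zero_mem⟩
  | add s₁ s₂ _ _ h1 h2 =>
    refine ⟨add_nonneg h1.1 h2.1, fun x hx0 hx => ?_⟩
    have hy : x ⊓ s₁ ∈ AddSubmonoid.closure (Atoms Γ) :=
      h1.2 _ (le_inf hx0 h1.1) inf_le_right
    have hz1 : x - (x ⊓ s₁) = 0 ⊔ (x - s₁) := by
      rw [sub_eq_add_neg, neg_inf, add_sup, add_neg_cancel, ← sub_eq_add_neg]
    have hz : x - (x ⊓ s₁) ∈ AddSubmonoid.closure (Atoms Γ) := by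
      refine h2.2 _ (by rw [hz1]; exact le_sup_left) ?_
      rw [hz1]
      exact sup_le h2.1 (by rwa [sub_le_iff_le_add'])
    have := add_mem hy hz
    rwa [add_sub_cancel] at this

private lemma tc_add {e₁ e₂ : Γ} (h1 : TCaux e₁) (h2 : TCaux e₂) : TCaux (e₁ + e₂) := by
  obtain ⟨n₁, c₁, h10, h1n, h1s⟩ := h1
  obtain ⟨n₂, c₂, h20, h2n, h2s⟩ := h2
  refine ⟨n₁ + n₂, fun i => if i < n₁ then c₁ i else c₂ (i - n₁) + e₁, ?_, ?_, ?_⟩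
  · by_cases h : 0 < n₁
    · simp [h, h10]
    · have hn : n₁ = 0 := by omega
      have : e₁ = 0 := by rw [← h1n, hn, h10]
      simp [h, h20, this]
  · have : ¬ (n₁ + n₂ < n₁) := by omega
    simp [this, h2n, add_comm]
  · intro i hi
    by_cases h : i < n₁
    · have hc1 : (if i + 1 < n₁ then c₁ (i+1) else c₂ (i + 1 - n₁) + e₁) = c₁ (i + 1) := by
        by_cases h' : i + 1 < n₁
        · simp [h']
        · have : i + 1 = n₁ := by omega
          simp [h', this, h20, ← h1n]
      simp only [hc1]
      simpa [h] using h1s i h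
    · have h' : ¬ (i + 1 < n₁) := by omega
      have hj : i + 1 - n₁ = (i - n₁) + 1 := by omega
      have hjn : i - n₁ < n₂ := by omega
      obtain ⟨hle, hint⟩ := h2s (i - n₁) hjn
      simp only [h, h', if_neg, hj, if_false]
      constructor
      · exact add_le_add_left hle e₁
      · intro x hx
        have hx' : x - e₁ ∈ Set.Icc (c₂ (i - n₁)) (c₂ (i - n₁ + 1)) := by
          constructor
          · rw [le_sub_iff_add_le]; exact hx.1
          · rw [sub_le_iff_le_add]; exact hx.2
        rcases hint _ hx' with h'' | h'' <;> [left; right] <;>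
          · rw [← sub_add_cancel x e₁, h'']

private lemma tc_mp : ∀ (n : ℕ) (c : ℕ → Γ), c 0 = 0 →
    (∀ i < n, c i ≤ c (i + 1) ∧ ∀ x ∈ Set.Icc (c i) (c (i + 1)), x = c i ∨ x = c (i + 1)) →
    c n ∈ AddSubmonoid.closure (Atoms Γ)
  | 0, c, h0, _ => by rw [h0]; exact zero_mem _
  | n+1, c, h0, hs => by
    have ih := tc_mp n c h0 (fun i hi => hs i (by omega))
    obtain ⟨hle, hint⟩ := hs n (by omega)
    have hd : c (n+1) - c n ∈ Atoms Γ := by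
      refine ⟨sub_nonneg.mpr hle, fun x hx => ?_⟩
      have hx' : x + c n ∈ Set.Icc (c n) (c (n+1)) :=
        ⟨le_add_of_nonneg_left hx.1, by rw [← le_sub_iff_add_le]; exact hx.2⟩
      rcases hint _ hx' with h | h
      · left; exact add_right_cancel (h.trans (zero_add _).symm)
      · right; rw [eq_sub_iff_add_eq]; exact h
    have := add_mem (AddSubmonoid.subset_closure hd) ih
    rwa [sub_add_cancel] at this

private lemma tc_iff {e : Γ} : TCaux e ↔ e ∈ AddSubmonoid.closure (Atoms Γ) := by
  constructor
  · rintro ⟨n, c, h0, hn, hs⟩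
    subst hn
    exact tc_mp n c h0 hs
  · intro he
    induction he using AddSubmonoid.closure_induction with
    | mem b hb =>
      refine ⟨1, fun i => if i = 0 then 0 else b, by simp, by simp, ?_⟩
      intro i hi
      have : i = 0 := by omega
      subst this
      simp only [if_pos rfl, if_neg one_ne_zero]
      exact ⟨hb.1, hb.2⟩
    | zero => exact ⟨0, fun _ => 0, rfl, rfl, by omega⟩
    | add a b _ _ ha hb => exact tc_add ha hb

end aux

/-- Let `Γ` be a lattice-ordered abelian group, and let `C` be the set of `a ∈ Γ` such that
both `a⁺ = a ⊔ 0` and `a⁻ = (-a) ⊔ 0` admit a finite chain `0 = c₀ ≤ ⋯ ≤ c_n = e` with each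
interval `[c_i, c_{i+1}]` having at most two elements.  Then `C` is a convex ℓ-subgroup of
`Γ`, and the nonnegative elements of `C` are exactly the finite sums of elements `b ≥ 0`
such that `[0, b]` has at most two elements. -/
theorem stmt13 {Γ : Type*} [AddCommGroup Γ] [Lattice Γ]
    [CovariantClass Γ Γ (· + ·) (· ≤ ·)] :
    let twoChain : Γ → Prop := fun e => ∃ (n : ℕ) (c : ℕ → Γ), c 0 = 0 ∧ c n = e ∧
      ∀ i < n, c i ≤ c (i + 1) ∧
        ∀ x ∈ Set.Icc (c i) (c (i + 1)), x = c i ∨ x = c (i + 1)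
    let C : Set Γ := {a | twoChain (a ⊔ 0) ∧ twoChain ((-a) ⊔ 0)}
    (∃ S : AddSubgroup Γ, (S : Set Γ) = C) ∧
    (∀ a ∈ C, ∀ b ∈ C, a ⊔ b ∈ C) ∧
    (∀ a ∈ C, ∀ b ∈ C, ∀ x : Γ, a ≤ x → x ≤ b → x ∈ C) ∧
    ({a ∈ C | 0 ≤ a} =
      ↑(AddSubmonoid.closure {b : Γ | 0 ≤ b ∧ ∀ x ∈ Set.Icc (0 : Γ) b, x = 0 ∨ x = b})) := by
  intro twoChain C
  set M := AddSubmonoid.closure (Atoms Γ) with hMdef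
  have hmem : ∀ a : Γ, a ∈ C ↔ a ⊔ 0 ∈ M ∧ (-a) ⊔ 0 ∈ M := fun a =>
    and_congr (tc_iff (e := a ⊔ 0)) (tc_iff (e := (-a) ⊔ 0))
  have hered : ∀ s ∈ M, ∀ x : Γ, 0 ≤ x → x ≤ s → x ∈ M := fun s hs => (key_hered hs).2
  have hzero : (0 : Γ) ∈ C := by
    rw [hmem]
    simp only [neg_zero, sup_idem]
    exact ⟨zero_mem M, zero_mem M⟩
  have hadd : ∀ a b : Γ, a ∈ C → b ∈ C → a + b ∈ C := by
    intro a b ha hb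
    rw [hmem] at ha hb ⊢
    constructor
    · refine hered _ (add_mem ha.1 hb.1) _ le_sup_right
        (sup_le (add_le_add le_sup_left le_sup_left)
          (add_nonneg le_sup_right le_sup_right))
    · rw [neg_add]
      refine hered _ (add_mem ha.2 hb.2) _ le_sup_right
        (sup_le (add_le_add le_sup_left le_sup_left)
          (add_nonneg le_sup_right le_sup_right))
  have hneg : ∀ a : Γ, a ∈ C → -a ∈ C := by
    intro a ha
    rw [hmem] at ha ⊢
    rw [neg_neg]
    exact ⟨ha.2, ha.1⟩
  refine ⟨⟨⟨⟨⟨C, fun {a b} => hadd a b⟩, hzero⟩, fun {a} => hneg a⟩, rfl⟩, ?_, ?_, ?_⟩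
  · -- sup closed
    intro a ha b hb
    rw [hmem] at ha hb ⊢
    constructor
    · refine hered _ (add_mem ha.1 hb.1) _ le_sup_right (sup_le (sup_le ?_ ?_)
        (add_nonneg le_sup_right le_sup_right))
      · exact le_sup_left.trans (le_add_of_nonneg_right le_sup_right)
      · exact le_sup_left.trans (le_add_of_nonneg_left le_sup_right)
    · refine hered _ ha.2 _ le_sup_right (sup_le ?_ le_sup_right)
      rw [neg_sup]
      exact inf_le_left.trans le_sup_left
  · -- convex
    intro a ha b hb x hax hxb
    rw [hmem] at ha hb ⊢
    constructor
    · exact hered _ hb.1 _ le_sup_right (sup_le (hxb.trans le_sup_left) le_sup_right)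
    · exact hered _ ha.2 _ le_sup_right (sup_le ((neg_le_neg_iff.mpr hax).trans le_sup_left) le_sup_right)
  · -- positive cone
    ext a
    simp only [Set.mem_setOf_eq, SetLike.mem_coe]
    show (a ∈ C ∧ 0 ≤ a) ↔ a ∈ M
    constructor
    · rintro ⟨ha, h0⟩
      rw [hmem] at ha
      rw [sup_eq_left.mpr h0] at ha
      exact ha.1
    · intro ha
      have h0 : 0 ≤ a := (key_hered ha).1
      refine ⟨(hmem a).mpr ⟨?_, ?_⟩, h0⟩
      · rwa [sup_eq_left.mpr h0]
      · rw [sup_eq_right.mpr (neg_nonpos.mpr h0)]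
        exact zero_mem M
end

section
/- Let Γ be a lattice-ordered abelian group. Let C be the set of all a ∈ Γ such that for each of e = a⁺ and e = a⁻ there exists a finite chain 0 = c₀ ≤ c₁ ≤ ⋯ ≤ c_n = e in Γ such that each interval [c_i, c_{i+1}] is totally ordered. Then C is a convex ℓ-subgroup of Γ, and the set of nonnegative elements of C is precisely the set of finite sums of elements b ∈ Γ⁺ such that the interval [0, b] is totally ordered. -/
section Aux
variable {Γ : Type*} [AddCommGroup Γ] [Lattice Γ] [CovariantClass Γ Γ (· + ·) (· ≤ ·)]

private abbrev PS (Γ : Type*) [AddCommGroup Γ] [Lattice Γ] : Set Γ :=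
  {b : Γ | 0 ≤ b ∧ ∀ x ∈ Set.Icc (0 : Γ) b, ∀ y ∈ Set.Icc (0 : Γ) b, x ≤ y ∨ y ≤ x}

private lemma nonneg_of_mem {e : Γ} (he : e ∈ AddSubmonoid.closure (PS Γ)) : 0 ≤ e := by
  induction he using AddSubmonoid.closure_induction with
  | mem x hx => exact hx.1
  | zero => exact le_refl 0
  | add x y _ _ hx hy => exact add_nonneg hx hy

/-- Riesz: the closure is convex on nonnegatives. -/
private lemma mem_of_le {e y : Γ} (he : e ∈ AddSubmonoid.closure (PS Γ))
    (hy0 : 0 ≤ y) (hye : y ≤ e) : y ∈ AddSubmonoid.closure (PS Γ) := by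
  induction he using AddSubmonoid.closure_induction generalizing y with
  | mem b hb =>
      exact AddSubmonoid.subset_closure
        ⟨hy0, fun x hx z hz => hb.2 x ⟨hx.1, hx.2.trans hye⟩ z ⟨hz.1, hz.2.trans hye⟩⟩
  | zero => simpa [le_antisymm hye hy0] using AddSubmonoid.zero_mem _
  | add x₁ x₂ hx₁ hx₂ ih₁ ih₂ =>
      have h1 : 0 ≤ x₁ := nonneg_of_mem hx₁
      have h2 : 0 ≤ x₂ := nonneg_of_mem hx₂
      have hy1 : y ⊓ x₁ ∈ AddSubmonoid.closure (PS Γ) :=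
        ih₁ (le_inf hy0 h1) inf_le_right
      have hle : y - y ⊓ x₁ ≤ x₂ := by
        rw [sub_inf, sub_self]
        exact sup_le h2 (by rwa [sub_le_iff_le_add'])
      have hy2 : y - y ⊓ x₁ ∈ AddSubmonoid.closure (PS Γ) :=
        ih₂ (sub_nonneg.2 inf_le_left) hle
      have : y ⊓ x₁ + (y - y ⊓ x₁) = y := by abel
      exact this ▸ AddSubmonoid.add_mem _ hy1 hy2

private def ChainD (e : Γ) : Prop := ∃ (n : ℕ) (c : ℕ → Γ), c 0 = 0 ∧ c n = e ∧
  ∀ i < n, c i ≤ c (i + 1) ∧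
    ∀ x ∈ Set.Icc (c i) (c (i + 1)), ∀ y ∈ Set.Icc (c i) (c (i + 1)), x ≤ y ∨ y ≤ x

private lemma chain_to_mem {e : Γ} (h : ChainD e) : e ∈ AddSubmonoid.closure (PS Γ) := by
  obtain ⟨n, c, h0, hn, hstep⟩ := h
  have key : ∀ k, k ≤ n → c k ∈ AddSubmonoid.closure (PS Γ) := by
    intro k
    induction k with
    | zero => intro _; rw [h0]; exact AddSubmonoid.zero_mem _
    | succ k ih =>
        intro hk
        have hk' : k < n := hk
        obtain ⟨hle, htot⟩ := hstep k hk'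
        have hd : c (k + 1) - c k ∈ PS Γ := by
          refine ⟨sub_nonneg.2 hle, fun x hx y hy => ?_⟩
          have hx' : x + c k ∈ Set.Icc (c k) (c (k + 1)) :=
            ⟨le_add_of_nonneg_left hx.1, by
              have := add_le_add_left hx.2 (c k); simpa using this⟩
          have hy' : y + c k ∈ Set.Icc (c k) (c (k + 1)) :=
            ⟨le_add_of_nonneg_left hy.1, by
              have := add_le_add_left hy.2 (c k); simpa using this⟩
          rcases htot _ hx' _ hy' with h | h
          · exact Or.inl (by simpa using h)
          · exact Or.inr (by simpa using h)
        have : c k + (c (k + 1) - c k) = c (k + 1) := by abel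
        exact this ▸ AddSubmonoid.add_mem _ (ih hk'.le) (AddSubmonoid.subset_closure hd)
  rw [← hn]; exact key n le_rfl

private lemma mem_to_chain {e : Γ} (h : e ∈ AddSubmonoid.closure (PS Γ)) : ChainD e := by
  induction h using AddSubmonoid.closure_induction with
  | mem b hb =>
      refine ⟨1, fun i => if i = 0 then 0 else b, by simp, by simp, ?_⟩
      intro i hi
      interval_cases i
      constructor
      · simpa using hb.1
      · simpa using hb.2
  | zero => exact ⟨0, fun _ => 0, rfl, rfl, fun i hi => absurd hi (by omega)⟩
  | add e f _ _ ihe ihf =>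
      obtain ⟨n, c, hc0, hcn, hcstep⟩ := ihe
      obtain ⟨m, d, hd0, hdm, hdstep⟩ := ihf
      refine ⟨n + m, fun k => if k < n then c k else e + d (k - n), ?_, ?_, ?_⟩
      · by_cases h : 0 < n
        · simp [h, hc0]
        · have hn0 : n = 0 := by omega
          simp [h, hn0, ← hc0, hn0 ▸ hcn, hd0]
      · simp [hdm]
      · intro i hi
        by_cases hin : i < n
        · have hg1 : (if i + 1 < n then c (i + 1) else e + d (i + 1 - n)) = c (i + 1) := by
            by_cases h1 : i + 1 < n
            · simp [h1]
            · have : i + 1 = n := by omega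
              simp [h1, this, hcn, hd0]
          simp only [if_pos hin, hg1]
          exact hcstep i hin
        · have hj : i - n < m := by omega
          have h1 : ¬ i + 1 < n := by omega
          have h2 : i + 1 - n = (i - n) + 1 := by omega
          simp only [if_neg hin, if_neg h1, h2]
          obtain ⟨hle, htot⟩ := hdstep (i - n) hj
          refine ⟨add_le_add_right hle e, fun x hx y hy => ?_⟩
          have hx' : x - e ∈ Set.Icc (d (i - n)) (d (i - n + 1)) :=
            ⟨le_sub_iff_add_le'.2 hx.1, sub_le_iff_le_add'.2 hx.2⟩
          have hy' : y - e ∈ Set.Icc (d (i - n)) (d (i - n + 1)) :=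
            ⟨le_sub_iff_add_le'.2 hy.1, sub_le_iff_le_add'.2 hy.2⟩
          rcases htot _ hx' _ hy' with h | h
          · exact Or.inl (by simpa using sub_le_sub_right h (-e))
          · exact Or.inr (by simpa using sub_le_sub_right h (-e))

end Aux

/-- Let `Γ` be a lattice-ordered abelian group, and let `C` be the set of `a ∈ Γ` such that
both `a⁺ = a ⊔ 0` and `a⁻ = (-a) ⊔ 0` admit a finite chain `0 = c₀ ≤ ⋯ ≤ c_n = e` with each
interval `[c_i, c_{i+1}]` totally ordered.  Then `C` is a convex ℓ-subgroup of `Γ`, and the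
nonnegative elements of `C` are exactly the finite sums of elements `b ≥ 0` such that
`[0, b]` is totally ordered. -/
theorem stmt14 {Γ : Type*} [AddCommGroup Γ] [Lattice Γ]
    [CovariantClass Γ Γ (· + ·) (· ≤ ·)] :
    let chainDim0 : Γ → Prop := fun e => ∃ (n : ℕ) (c : ℕ → Γ), c 0 = 0 ∧ c n = e ∧
      ∀ i < n, c i ≤ c (i + 1) ∧
        ∀ x ∈ Set.Icc (c i) (c (i + 1)), ∀ y ∈ Set.Icc (c i) (c (i + 1)), x ≤ y ∨ y ≤ x
    let C : Set Γ := {a | chainDim0 (a ⊔ 0) ∧ chainDim0 ((-a) ⊔ 0)}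
    (∃ S : AddSubgroup Γ, (S : Set Γ) = C) ∧
    (∀ a ∈ C, ∀ b ∈ C, a ⊔ b ∈ C) ∧
    (∀ a ∈ C, ∀ b ∈ C, ∀ x : Γ, a ≤ x → x ≤ b → x ∈ C) ∧
    ({a ∈ C | 0 ≤ a} =
      ↑(AddSubmonoid.closure
        {b : Γ | 0 ≤ b ∧ ∀ x ∈ Set.Icc (0 : Γ) b, ∀ y ∈ Set.Icc (0 : Γ) b, x ≤ y ∨ y ≤ x})) := by
  intro chainDim0 C
  have hiff : ∀ e : Γ, chainDim0 e ↔ e ∈ AddSubmonoid.closure (PS Γ) :=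
    fun e => ⟨fun h => chain_to_mem h, fun h => mem_to_chain h⟩
  set M := AddSubmonoid.closure (PS Γ) with hM
  have hCmem : ∀ a : Γ, a ∈ C ↔ (a ⊔ 0 ∈ M ∧ (-a) ⊔ 0 ∈ M) := by
    intro a; exact and_congr (hiff _) (hiff _)
  -- closure facts about C
  have hCle : ∀ a : Γ, a ⊔ 0 ∈ M → (-a) ⊔ 0 ∈ M → a ∈ C := fun a h1 h2 => (hCmem a).2 ⟨h1, h2⟩
  have hzero : (0 : Γ) ∈ C := by
    refine hCle 0 ?_ ?_ <;> simpa using AddSubmonoid.zero_mem M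
  have hneg : ∀ a ∈ C, -a ∈ C := by
    intro a ha
    obtain ⟨h1, h2⟩ := (hCmem a).1 ha
    exact hCle (-a) h2 (by simpa using h1)
  have hadd : ∀ a ∈ C, ∀ b ∈ C, a + b ∈ C := by
    intro a ha b hb
    obtain ⟨ha1, ha2⟩ := (hCmem a).1 ha
    obtain ⟨hb1, hb2⟩ := (hCmem b).1 hb
    refine hCle (a + b) ?_ ?_
    · refine mem_of_le (AddSubmonoid.add_mem _ ha1 hb1) le_sup_right (sup_le ?_ ?_)
      · exact add_le_add le_sup_left le_sup_left
      · exact add_nonneg le_sup_right le_sup_right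
    · refine mem_of_le (AddSubmonoid.add_mem _ ha2 hb2) le_sup_right (sup_le ?_ ?_)
      · rw [neg_add]; exact add_le_add le_sup_left le_sup_left
      · exact add_nonneg le_sup_right le_sup_right
  have hS : ∃ S : AddSubgroup Γ, (S : Set Γ) = C := by
    refine ⟨⟨⟨⟨C, ?_⟩, hzero⟩, ?_⟩, rfl⟩
    · intro a b ha hb; exact hadd a ha b hb
    · intro a ha; exact hneg a ha
  refine ⟨hS, ?_, ?_, ?_⟩
  · -- sup closed
    intro a ha b hb
    obtain ⟨ha1, ha2⟩ := (hCmem a).1 ha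
    obtain ⟨hb1, hb2⟩ := (hCmem b).1 hb
    refine hCle (a ⊔ b) ?_ ?_
    · refine mem_of_le (AddSubmonoid.add_mem _ ha1 hb1) le_sup_right (sup_le (sup_le ?_ ?_) ?_)
      · exact le_add_of_le_of_nonneg le_sup_left le_sup_right
      · exact le_add_of_nonneg_of_le le_sup_right le_sup_left
      · exact add_nonneg le_sup_right le_sup_right
    · exact mem_of_le ha2 le_sup_right
        (sup_le ((neg_le_neg_iff.2 le_sup_left).trans le_sup_left) le_sup_right)
  · -- convex
    intro a ha b hb x hax hxb
    obtain ⟨_, ha2⟩ := (hCmem a).1 ha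
    obtain ⟨hb1, _⟩ := (hCmem b).1 hb
    refine hCle x ?_ ?_
    · exact mem_of_le hb1 le_sup_right (sup_le (le_sup_left.trans' hxb) le_sup_right)
    · exact mem_of_le ha2 le_sup_right
        (sup_le (le_sup_left.trans' (neg_le_neg_iff.2 hax)) le_sup_right)
  · -- positive cone
    ext a
    simp only [Set.mem_setOf_eq, SetLike.mem_coe]
    constructor
    · rintro ⟨haC, ha0⟩
      obtain ⟨h1, _⟩ := (hCmem a).1 haC
      rwa [sup_eq_left.2 ha0] at h1
    · intro haM
      have ha0 : 0 ≤ a := nonneg_of_mem haM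
      refine ⟨hCle a ?_ ?_, ha0⟩
      · rwa [sup_eq_left.2 ha0]
      · rw [sup_eq_right.2 (neg_nonpos.2 ha0)]; exact AddSubmonoid.zero_mem M
end

section
/- Let X be a Boolean space and let P = {f ∈ C(X,ℤ) : f ≥ 0} be the positive cone of C(X,ℤ). Call a subset F ⊆ P a multiplication prime filter if F is nonempty, F ≠ P, F is upward closed in P, closed under pointwise minimum (f, g ∈ F implies f ⊓ g ∈ F), and f + g ∈ F implies f ∈ F or g ∈ F. Then the map x ↦ F_x := {f ∈ P : f(x) > 0} is a bijection from X onto the set of multiplication prime filters of P; moreover every multiplication prime filter of P is maximal (with respect to inclusion) among proper filters of P, where a filter of P is a nonempty, upward closed, meet-closed subset of P and it is proper if it is not all of P. -/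
open Set Classical

/-- The indicator function of a clopen set, as a continuous map to `ℤ`. -/
noncomputable def stmt15Ind {X : Type*} [TopologicalSpace X] {U : Set X} (hU : IsClopen U) :
    C(X, ℤ) :=
  ⟨fun z => if z ∈ U then 1 else 0, by
    apply IsLocallyConstant.continuous (f := fun z => if z ∈ U then (1 : ℤ) else 0)
    intro s
    have h : (fun z => if z ∈ U then (1 : ℤ) else 0) ⁻¹' s =
        (if (1 : ℤ) ∈ s then U else ∅) ∪ (if (0 : ℤ) ∈ s then Uᶜ else ∅) := by
      ext z
      by_cases hz : z ∈ U <;> by_cases h1 : (1 : ℤ) ∈ s <;> by_cases h0 : (0 : ℤ) ∈ s <;>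
        simp [hz, h1, h0]
    rw [h]
    apply IsOpen.union <;> split <;>
      first
        | exact hU.isOpen
        | exact hU.compl.isOpen
        | exact isOpen_empty⟩

theorem stmt15Ind_apply {X : Type*} [TopologicalSpace X] {U : Set X} (hU : IsClopen U) (z : X) :
    stmt15Ind hU z = if z ∈ U then 1 else 0 := rfl

theorem stmt15_nonneg_apply {X : Type*} [TopologicalSpace X] {f : C(X, ℤ)} (h : 0 ≤ f) (z : X) :
    0 ≤ f z := by
  have := ContinuousMap.le_def.mp h z
  simpa using this

theorem stmt15_nonneg_of_apply {X : Type*} [TopologicalSpace X] {f : C(X, ℤ)}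
    (h : ∀ z, 0 ≤ f z) : 0 ≤ f := by
  rw [ContinuousMap.le_def]
  intro z
  simpa using h z

theorem stmt15_le_of_apply {X : Type*} [TopologicalSpace X] {f g : C(X, ℤ)}
    (h : ∀ z, f z ≤ g z) : f ≤ g :=
  ContinuousMap.le_def.mpr h

theorem stmt15Ind_nonneg {X : Type*} [TopologicalSpace X] {U : Set X} (hU : IsClopen U) :
    0 ≤ stmt15Ind hU := by
  apply stmt15_nonneg_of_apply
  intro z
  rw [stmt15Ind_apply]
  split <;> omega

/-- Every multiplication prime filter of the positive cone of `C(X, ℤ)` is of the form `F_x`. -/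
theorem stmt15_exists_pt {X : Type*} [TopologicalSpace X] [CompactSpace X] [T2Space X]
    (F : Set C(X, ℤ))
    (hsub : F ⊆ {f | 0 ≤ f}) (hne : F.Nonempty)
    (hup : ∀ f ∈ F, ∀ g : C(X, ℤ), 0 ≤ g → f ≤ g → g ∈ F)
    (hmeet : ∀ f ∈ F, ∀ g ∈ F, f ⊓ g ∈ F)
    (hnp : F ≠ {f | 0 ≤ f})
    (hprime : ∀ f : C(X, ℤ), 0 ≤ f → ∀ g : C(X, ℤ), 0 ≤ g → f + g ∈ F → f ∈ F ∨ g ∈ F) :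
    ∃ x : X, F = {f : C(X, ℤ) | 0 ≤ f ∧ 0 < f x} := by
  -- 0 ∉ F
  have h0 : (0 : C(X, ℤ)) ∉ F := by
    intro h0
    apply hnp
    refine Subset.antisymm hsub fun p hp => hup 0 h0 p hp hp
  -- the supports form a directed family of nonempty clopen sets
  haveI : Nonempty F := hne.to_subtype
  have hint : (⋂ f : F, {z | (f : C(X, ℤ)) z ≠ 0}).Nonempty := by
    apply IsCompact.nonempty_iInter_of_directed_nonempty_isCompact_isClosed
    · rintro ⟨f, hf⟩ ⟨g, hg⟩
      refine ⟨⟨f ⊓ g, hmeet f hf g hg⟩, ?_, ?_⟩ <;>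
      · intro z hz
        simp only [mem_setOf_eq, ContinuousMap.inf_apply] at hz ⊢
        have h1 := stmt15_nonneg_apply (hsub hf) z
        have h2 := stmt15_nonneg_apply (hsub hg) z
        omega
    · rintro ⟨f, hf⟩
      by_contra he
      rw [Set.not_nonempty_iff_eq_empty] at he
      apply h0
      have : f = 0 := by
        ext z
        have : z ∉ {z | f z ≠ 0} := he ▸ notMem_empty z
        simpa using this
      rwa [this] at hf
    · rintro ⟨f, hf⟩
      exact (((isClopen_discrete ({0}ᶜ : Set ℤ)).preimage f.continuous).isClosed).isCompact
    · rintro ⟨f, hf⟩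
      exact ((isClopen_discrete ({0}ᶜ : Set ℤ)).preimage f.continuous).isClosed
  obtain ⟨x, hx⟩ := hint
  have hxall : ∀ f ∈ F, 0 < f x := by
    intro f hf
    have h1 : f x ≠ 0 := by
      have := mem_iInter.mp hx ⟨f, hf⟩
      simpa using this
    have h2 := stmt15_nonneg_apply (hsub hf) x
    omega
  -- 1 ∈ F
  have hone : (1 : C(X, ℤ)) ∈ F := by
    obtain ⟨f₀, hf₀⟩ := hne
    obtain ⟨z, -, hz⟩ :=
      isCompact_univ.exists_isMaxOn ⟨x, trivial⟩ f₀.continuous.continuousOn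
    have hkey : ∀ m : ℕ, (ContinuousMap.const X (m : ℤ)) ∈ F → (1 : C(X, ℤ)) ∈ F := by
      intro m
      induction m with
      | zero =>
        intro h
        have := hxall _ h
        simp at this
      | succ m ih =>
        intro h
        have heq : ContinuousMap.const X ((m : ℤ)) + 1 ∈ F := by
          have e : ContinuousMap.const X (((m + 1 : ℕ) : ℤ)) =
              ContinuousMap.const X ((m : ℤ)) + 1 := by
            ext w
            simp
          rwa [e] at h
        rcases hprime (ContinuousMap.const X ((m : ℤ)))
            (stmt15_nonneg_of_apply fun a => by simp) 1
            (stmt15_nonneg_of_apply fun a => by simp) heq with h' | h'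
        · exact ih h'
        · exact h'
    apply hkey (f₀ z).toNat
    apply hup f₀ hf₀
    · exact stmt15_nonneg_of_apply fun a => by simp
    · apply stmt15_le_of_apply
      intro a
      have h1 : f₀ a ≤ f₀ z := hz trivial
      have h2 := stmt15_nonneg_apply (hsub hf₀) z
      simp only [ContinuousMap.const_apply]
      omega
  refine ⟨x, Subset.antisymm ?_ ?_⟩
  · intro f hf
    exact ⟨hsub hf, hxall f hf⟩
  · rintro g ⟨hg0, hgx⟩
    -- let h be the indicator of {z | g z = 0}
    have hclopen : IsClopen {z | g z = 0} :=
      (isClopen_discrete ({0} : Set ℤ)).preimage g.continuous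
    have hsum : g + stmt15Ind hclopen ∈ F := by
      apply hup 1 hone
      · apply stmt15_nonneg_of_apply
        intro a
        have h1 := stmt15_nonneg_apply hg0 a
        have h2 := stmt15_nonneg_apply (stmt15Ind_nonneg hclopen) a
        simp only [ContinuousMap.add_apply]
        omega
      · apply stmt15_le_of_apply
        intro a
        have h1 := stmt15_nonneg_apply hg0 a
        simp only [ContinuousMap.add_apply, ContinuousMap.one_apply, stmt15Ind_apply]
        by_cases hcase : a ∈ {z | g z = 0}
        · rw [if_pos hcase]; simp only [mem_setOf_eq] at hcase; omega
        · rw [if_neg hcase]; simp only [mem_setOf_eq] at hcase; omega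
    rcases hprime g hg0 (stmt15Ind hclopen) (stmt15Ind_nonneg hclopen) hsum with h' | h'
    · exact h'
    · exfalso
      have := hxall _ h'
      rw [stmt15Ind_apply, if_neg (by simp only [mem_setOf_eq]; omega)] at this
      omega

/-- Let `X` be a Boolean space and `P` the positive cone of `C(X, ℤ)`.  The map
`x ↦ F_x = {f ∈ P | f x > 0}` is a bijection from `X` onto the set of multiplication prime
filters of `P`; moreover every multiplication prime filter is maximal among proper filters
of `P`. -/
theorem stmt15 {X : Type*} [TopologicalSpace X] [CompactSpace X] [T2Space X]
    [TotallyDisconnectedSpace X] :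
    let P : Set C(X, ℤ) := {f | 0 ≤ f}
    let IsPFilter : Set C(X, ℤ) → Prop := fun F =>
      F ⊆ P ∧ F.Nonempty ∧ (∀ f ∈ F, ∀ g ∈ P, f ≤ g → g ∈ F) ∧
        (∀ f ∈ F, ∀ g ∈ F, f ⊓ g ∈ F)
    let IsMultPrime : Set C(X, ℤ) → Prop := fun F =>
      IsPFilter F ∧ F ≠ P ∧ ∀ f ∈ P, ∀ g ∈ P, f + g ∈ F → f ∈ F ∨ g ∈ F
    Set.BijOn (fun x : X => {f : C(X, ℤ) | 0 ≤ f ∧ 0 < f x})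
        Set.univ {F : Set C(X, ℤ) | IsMultPrime F} ∧
      ∀ F : Set C(X, ℤ), IsMultPrime F →
        ∀ G : Set C(X, ℤ), IsPFilter G → G ≠ P → F ⊆ G → F = G := by
  intro P IsPFilter IsMultPrime
  haveI : TotallySeparatedSpace X := loc_compact_t2_tot_disc_iff_tot_sep.mp inferInstance
  -- each F_x is a multiplication prime filter
  have hmaps : ∀ x : X, IsMultPrime {f : C(X, ℤ) | 0 ≤ f ∧ 0 < f x} := by
    intro x
    refine ⟨⟨fun f hf => hf.1, ⟨1, stmt15_nonneg_of_apply fun a => by simp, by simp⟩,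
        ?_, ?_⟩, ?_, ?_⟩
    · rintro f ⟨hf0, hfx⟩ g hg hfg
      have := ContinuousMap.le_def.mp hfg x
      exact ⟨hg, by omega⟩
    · rintro f ⟨hf0, hfx⟩ g ⟨hg0, hgx⟩
      refine ⟨?_, ?_⟩
      · apply stmt15_nonneg_of_apply
        intro a
        have h1 := stmt15_nonneg_apply hf0 a
        have h2 := stmt15_nonneg_apply hg0 a
        simp only [ContinuousMap.inf_apply]
        omega
      · simp only [ContinuousMap.inf_apply]; omega
    · intro hEq
      have h0P : (0 : C(X, ℤ)) ∈ P := by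
        show (0 : C(X, ℤ)) ≤ 0
        exact le_rfl
      rw [← hEq] at h0P
      have := h0P.2
      simp at this
    · rintro f hf g hg ⟨-, hsum⟩
      simp only [ContinuousMap.add_apply] at hsum
      have h1 := stmt15_nonneg_apply hf x
      have h2 := stmt15_nonneg_apply hg x
      rcases lt_or_ge 0 (f x) with h | h
      · exact Or.inl ⟨hf, h⟩
      · exact Or.inr ⟨hg, by omega⟩
  -- the key: every multiplication prime filter is F_x for some x
  have hkey : ∀ F : Set C(X, ℤ), IsMultPrime F →
      ∃ x : X, F = {f : C(X, ℤ) | 0 ≤ f ∧ 0 < f x} := by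
    rintro F ⟨⟨hsub, hne, hup, hmeet⟩, hnp, hprime⟩
    exact stmt15_exists_pt F hsub hne (fun f hf g hg => hup f hf g hg) hmeet hnp hprime
  constructor
  · refine ⟨fun x _ => hmaps x, ?_, ?_⟩
    · -- injectivity
      intro x _ y _ hEq
      by_contra hxy
      obtain ⟨U, hU, hxU, hyU⟩ := exists_isClopen_of_totally_separated hxy
      have hEq' : {f : C(X, ℤ) | 0 ≤ f ∧ 0 < f x} = {f : C(X, ℤ) | 0 ≤ f ∧ 0 < f y} := hEq
      have hmem : stmt15Ind hU ∈ {f : C(X, ℤ) | 0 ≤ f ∧ 0 < f x} := by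
        refine ⟨stmt15Ind_nonneg hU, ?_⟩
        rw [stmt15Ind_apply, if_pos hxU]
        omega
      rw [hEq'] at hmem
      obtain ⟨-, hpos⟩ := hmem
      rw [stmt15Ind_apply, if_neg hyU] at hpos
      omega
    · -- surjectivity
      intro F hF
      obtain ⟨x, hx⟩ := hkey F hF
      exact ⟨x, trivial, hx.symm⟩
  · -- maximality
    intro F hF G hG hGP hFG
    obtain ⟨x, hx⟩ := hkey F hF
    obtain ⟨hGsub, -, hGup, hGmeet⟩ := hG
    refine Set.Subset.antisymm hFG ?_
    intro g hg
    rw [hx]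
    refine ⟨hGsub hg, ?_⟩
    by_contra hgx
    have hg0 : (0 : C(X, ℤ)) ≤ g := hGsub hg
    have hgx0 : g x = 0 := by
      have := stmt15_nonneg_apply hg0 x
      omega
    have hclopen : IsClopen {z | g z = 0} :=
      (isClopen_discrete ({0} : Set ℤ)).preimage g.continuous
    have hindF : stmt15Ind hclopen ∈ F := by
      rw [hx]
      refine ⟨stmt15Ind_nonneg hclopen, ?_⟩
      rw [stmt15Ind_apply, if_pos (show x ∈ {z | g z = 0} from hgx0)]
      omega
    have hindG : stmt15Ind hclopen ∈ G := hFG hindF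
    have hzero : g ⊓ stmt15Ind hclopen = 0 := by
      ext z
      simp only [ContinuousMap.inf_apply, ContinuousMap.zero_apply, stmt15Ind_apply]
      have h1 := stmt15_nonneg_apply hg0 z
      by_cases hcase : z ∈ {z | g z = 0}
      · rw [if_pos hcase]; simp only [mem_setOf_eq] at hcase; omega
      · rw [if_neg hcase]; simp only [mem_setOf_eq] at hcase; omega
    have h0G : (0 : C(X, ℤ)) ∈ G := by
      have := hGmeet g hg _ hindG
      rwa [hzero] at this
    apply hGP
    refine Set.Subset.antisymm hGsub fun p hp => hGup 0 h0G p hp hp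
end

section
/- Let X be a Boolean space and f ∈ C(X,ℤ) with 0 < f (i.e., f ≥ 0 pointwise and f ≠ 0). If there is no g ∈ C(X,ℤ) with 0 < g < f, then there exists an isolated point y ∈ X (i.e., {y} is open in X) such that f(y) = 1 and f(x) = 0 for all x ≠ y. -/
/-- Let `X` be a Boolean space and `f ∈ C(X, ℤ)` with `0 < f`.  If there is no
`g ∈ C(X, ℤ)` with `0 < g < f`, then there is an isolated point `y ∈ X` with `f y = 1` and
`f x = 0` for all `x ≠ y`. -/
theorem stmt17 {X : Type*} [TopologicalSpace X] [CompactSpace X] [T2Space X]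
    [TotallyDisconnectedSpace X] (f : C(X, ℤ)) (hf : 0 < f)
    (hsimple : ¬ ∃ g : C(X, ℤ), 0 < g ∧ g < f) :
    ∃ y : X, IsOpen ({y} : Set X) ∧ f y = 1 ∧ ∀ x : X, x ≠ y → f x = 0 := by
  classical
  have hle : (0 : C(X, ℤ)) ≤ f := hf.le
  have hne : f ≠ 0 := hf.ne'
  obtain ⟨y, hy⟩ : ∃ y, f y ≠ 0 := by
    by_contra h
    push_neg at h
    exact hne (DFunLike.ext _ _ fun x => h x)
  have hpos : ∀ x, 0 ≤ f x := fun x => hle x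
  -- the indicator of the support
  set g : C(X, ℤ) := (⟨fun n : ℤ => if n = 0 then 0 else 1,
      continuous_of_discreteTopology⟩ : C(ℤ, ℤ)).comp f with hg
  have hgval : ∀ x, g x = if f x = 0 then 0 else 1 := fun x => rfl
  have hg0 : (0 : C(X, ℤ)) < g := by
    refine lt_of_le_of_ne (fun x => ?_) ?_
    · show (0 : ℤ) ≤ g x
      rw [hgval]; split <;> simp
    · intro h
      have : (0 : C(X, ℤ)) y = g y := congrArg (fun k : C(X, ℤ) => k y) h
      rw [hgval, if_neg hy] at this
      simp at this
  have hgle : g ≤ f := by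
    intro x
    show g x ≤ f x
    rw [hgval]
    split
    · simp [*]
    · have := hpos x; omega
  have hgf : g = f := by
    by_contra h
    exact hsimple ⟨g, hg0, lt_of_le_of_ne hgle h⟩
  have hfone : ∀ x, f x ≠ 0 → f x = 1 := by
    intro x hx
    have : g x = f x := congrArg (fun k : C(X, ℤ) => k x) hgf
    rw [hgval, if_neg hx] at this
    omega
  have hyone : f y = 1 := hfone y hy
  have hsingle : ∀ z, f z ≠ 0 → z = y := by
    intro z hz
    by_contra hzy
    haveI : TotallySeparatedSpace X := loc_compact_t2_tot_disc_iff_tot_sep.mp inferInstance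
    obtain ⟨U, hU, hzU, hyU⟩ := exists_isClopen_of_totally_separated (hzy : z ≠ y)
    have h1 : Continuous fun x => if x ∈ U then (1 : ℤ) else 0 := by
      have hb := (continuous_boolIndicator_iff_isClopen U).mpr hU
      have hc : Continuous ((fun b : Bool => if b then (1 : ℤ) else 0) ∘ U.boolIndicator) :=
        continuous_of_discreteTopology.comp hb
      convert hc using 1
      ext x
      by_cases hx : x ∈ U <;> simp [Set.boolIndicator, hx]
    have hcont : Continuous fun x => (if x ∈ U then (1 : ℤ) else 0) * f x :=
      h1.mul f.continuous
    set h : C(X, ℤ) := ⟨fun x => (if x ∈ U then (1 : ℤ) else 0) * f x, hcont⟩ with hh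
    have hhval : ∀ x, h x = (if x ∈ U then (1 : ℤ) else 0) * f x := fun x => rfl
    apply hsimple
    refine ⟨h, ?_, ?_⟩
    · refine lt_of_le_of_ne (fun x => ?_) ?_
      · show (0 : ℤ) ≤ h x
        rw [hhval]; split
        · simpa using hpos x
        · simp
      · intro h0
        have : (0 : C(X, ℤ)) z = h z := congrArg (fun k : C(X, ℤ) => k z) h0
        rw [hhval, if_pos hzU] at this
        simp at this
        exact hz this.symm
    · refine lt_of_le_of_ne (fun x => ?_) ?_
      · show h x ≤ f x
        rw [hhval]; split
        · simp
        · simpa using hpos x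
      · intro h0
        have : h y = f y := congrArg (fun k : C(X, ℤ) => k y) h0
        rw [hhval, if_neg (by simpa using hyU), hyone] at this
        omega
  refine ⟨y, ?_, hyone, fun x hxy => by_contra fun hx => hxy (hsingle x hx)⟩
  have hset : ({y} : Set X) = f ⁻¹' {1} := by
    ext x
    simp only [Set.mem_singleton_iff, Set.mem_preimage, Set.mem_singleton_iff]
    constructor
    · rintro rfl; exact hyone
    · intro hx; exact hsingle x (by omega)
  rw [hset]
  exact f.continuous.isOpen_preimage _ (isOpen_discrete _)
end

section
/- Let X be a Boolean space and f ∈ C(X,ℤ). Then f(x) = 0 for every non-isolated point x of X if and only if f belongs to the subgroup of C(X,ℤ) generated by the characteristic functions χ_{{y}} of singletons {y} with y an isolated point of X (where χ_{{y}}(y) = 1 and χ_{{y}}(x) = 0 for x ≠ y). -/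
open Classical in
noncomputable def chi18 {X : Type*} [TopologicalSpace X] [T2Space X] (y : X)
    (hy : IsOpen ({y} : Set X)) : C(X, ℤ) :=
  ⟨fun x => if x = y then 1 else 0, by
    apply IsLocallyConstant.continuous
    intro s
    by_cases h1 : (1 : ℤ) ∈ s <;> by_cases h0 : (0 : ℤ) ∈ s
    · convert isOpen_univ
      ext x; simp only [Set.mem_preimage, Set.mem_univ, iff_true]
      split <;> assumption
    · convert hy
      ext x; simp only [Set.mem_preimage, Set.mem_singleton_iff]
      split <;> simp_all
    · convert (isClosed_singleton (x := y)).isOpen_compl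
      ext x; simp only [Set.mem_preimage, Set.mem_compl_iff, Set.mem_singleton_iff]
      split <;> simp_all
    · convert isOpen_empty
      ext x; simp only [Set.mem_preimage, Set.mem_empty_iff_false, iff_false]
      split <;> simp_all⟩

/-- Let `X` be a Boolean space and `f ∈ C(X, ℤ)`.  Then `f` vanishes at every non-isolated
point of `X` if and only if `f` lies in the subgroup of `C(X, ℤ)` generated by the
characteristic functions of singletons of isolated points. -/
theorem stmt18 {X : Type*} [TopologicalSpace X] [CompactSpace X] [T2Space X]
    [TotallyDisconnectedSpace X] (f : C(X, ℤ)) :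
    (∀ x : X, ¬ IsOpen ({x} : Set X) → f x = 0) ↔
      f ∈ AddSubgroup.closure
        {g : C(X, ℤ) | ∃ y : X, IsOpen ({y} : Set X) ∧ g y = 1 ∧
          ∀ x : X, x ≠ y → g x = 0} := by
  constructor
  · intro h
    set S : Set X := f ⁻¹' ({0}ᶜ) with hS
    have hiso : ∀ x ∈ S, IsOpen ({x} : Set X) := by
      intro x hx
      by_contra hc
      exact hx (h x hc)
    have hopen : IsOpen S := (isOpen_discrete _).preimage f.continuous
    have hclosed : IsClosed S := (isClosed_discrete _).preimage f.continuous
    have hcpt : IsCompact S := hclosed.isCompact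
    -- S is finite
    have hfin : S.Finite := by
      obtain ⟨t, ht⟩ := hcpt.elim_finite_subcover (fun y : S => ({(y : X)} : Set X))
        (fun y => hiso y y.2) (by intro x hx; exact Set.mem_iUnion.2 ⟨⟨x, hx⟩, rfl⟩)
      apply Set.Finite.subset (Set.finite_range (fun y : t => (y : X)))
      intro x hx
      obtain ⟨y, hy⟩ := Set.mem_iUnion.1 (ht hx)
      obtain ⟨hyt, hxy⟩ := Set.mem_iUnion.1 hy
      exact ⟨⟨y, hyt⟩, hxy.symm⟩
    classical
    set T : Finset X := hfin.toFinset with hT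
    have hmemT : ∀ x : X, x ∈ T ↔ f x ≠ 0 := by
      intro x; simp [hT, hS, Set.Finite.mem_toFinset]
    have hyiso : ∀ y ∈ T, IsOpen ({y} : Set X) := by
      intro y hy
      exact hiso y (by simpa [hS] using (hmemT y).1 hy)
    have hfeq : f = ∑ y ∈ T.attach, f y • chi18 (y : X) (hyiso y y.2) := by
      ext x
      rw [ContinuousMap.sum_apply]
      have : ∀ y ∈ T.attach, (f (y : X) • chi18 (y : X) (hyiso y y.2)) x
          = if x = (y : X) then f (y : X) else 0 := by
        intro y _
        simp [chi18]
      rw [Finset.sum_congr rfl this]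
      rw [Finset.sum_attach T (fun y => if x = y then f y else 0)]
      rw [Finset.sum_ite_eq T x (fun y => f y)]
      split
      · rfl
      · rename_i hx
        by_contra hc
        exact hx ((hmemT x).2 (fun h0 => hc h0))
    rw [hfeq]
    apply AddSubgroup.sum_mem
    intro y _
    apply AddSubgroup.zsmul_mem
    apply AddSubgroup.subset_closure
    exact ⟨(y : X), hyiso y y.2, by simp [chi18], fun x hx => by simp [chi18, hx]⟩
  · intro hmem x hx
    induction hmem using AddSubgroup.closure_induction with
    | mem g hg =>
      obtain ⟨y, hy, _, hg0⟩ := hg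
      refine hg0 x (fun hxy => hx (hxy ▸ hy))
    | zero => rfl
    | add a b _ _ ha hb => simp [ha, hb]
    | neg a _ ha => simp [ha]
end

section
/- Let R be a commutative ring and a, b, α, r, s ∈ R with aα = br and b(1−α) = as. Then aR ∩ bR = aαR + b(1−α)R. Consequently, in an arithmetical ring the intersection of any two finitely generated ideals is finitely generated. -/
/-- Localization commutes with finite intersections of ideals. -/
lemma map_inf_localization {R : Type*} [CommRing R] (M : Submonoid R) (S : Type*)
    [CommRing S] [Algebra R S] [IsLocalization M S] (I J : Ideal R) :
    Ideal.map (algebraMap R S) (I ⊓ J) =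
      Ideal.map (algebraMap R S) I ⊓ Ideal.map (algebraMap R S) J := by
  refine le_antisymm (Ideal.map_inf_le _) ?_
  rintro x ⟨hxI, hxJ⟩
  obtain ⟨⟨r, s⟩, rfl⟩ := IsLocalization.mk'_surjective M x
  obtain ⟨t, htM, ht⟩ := (IsLocalization.mk'_mem_map_algebraMap_iff M S I r s).mp hxI
  obtain ⟨u, huM, hu⟩ := (IsLocalization.mk'_mem_map_algebraMap_iff M S J r s).mp hxJ
  refine (IsLocalization.mk'_mem_map_algebraMap_iff M S (I ⊓ J) r s).mpr
    ⟨t * u, M.mul_mem htM huM, ?_, ?_⟩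
  · have h : t * u * r = u * (t * r) := by ring
    rw [h]; exact I.mul_mem_left u ht
  · have h : t * u * r = t * (u * r) := by ring
    rw [h]; exact J.mul_mem_left t hu

/-- The "standard fact": in an arithmetical ring, for all `a b` there are `r s α` with
`a*α = b*r` and `b*(1-α) = a*s`. -/
lemma exists_alpha {R : Type*} [CommRing R] (hA : IsArithmetical R) (a b : R) :
    ∃ α r s : R, a * α = b * r ∧ b * (1 - α) = a * s := by
  set I : Ideal R := (Ideal.span {b}).colon (Ideal.span {a}) with hI
  set I' : Ideal R := (Ideal.span {a}).colon (Ideal.span {b}) with hI'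
  have htop : I ⊔ I' = ⊤ := by
    by_contra h
    obtain ⟨m, hm, hle⟩ := Ideal.exists_le_maximal _ h
    set f := algebraMap R (Localization.AtPrime m) with hf
    have key : ∀ x y : R,
        Ideal.span {f x} ≤ Ideal.span {f y} →
        ∃ α : R, α ∉ m ∧ α * x ∈ Ideal.span {y} := by
      intro x y hxy
      have hx : f x ∈ Ideal.map f (Ideal.span {y}) := by
        rw [Ideal.map_span, Set.image_singleton]
        exact hxy (Ideal.subset_span rfl)
      obtain ⟨⟨⟨z, hz⟩, v⟩, hv⟩ :=
        (IsLocalization.mem_map_algebraMap_iff m.primeCompl _).mp hx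
      rw [← map_mul, IsLocalization.eq_iff_exists m.primeCompl] at hv
      obtain ⟨c, hc⟩ := hv
      refine ⟨(v : R) * (c : R), fun hmem => ?_, ?_⟩
      · exact (m.primeCompl.mul_mem v.2 c.2 : (v : R) * (c : R) ∈ m.primeCompl) hmem
      · have : (v : R) * (c : R) * x = (c : R) * z := by
          have := hc; push_cast at this ⊢; ring_nf at this ⊢; linear_combination this
        rw [this]
        exact Ideal.mul_mem_left _ _ hz
    rcases hA m (Ideal.span {f a}) (Ideal.span {f b}) with hab | hba
    · obtain ⟨α, hαm, hα⟩ := key a b hab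
      exact hαm (hle (Ideal.mem_sup_left (Ideal.mem_colon_span_singleton.mpr hα)))
    · obtain ⟨α, hαm, hα⟩ := key b a hba
      exact hαm (hle (Ideal.mem_sup_right (Ideal.mem_colon_span_singleton.mpr hα)))
  have h1 : (1 : R) ∈ I ⊔ I' := htop ▸ Submodule.mem_top
  obtain ⟨α, hα, β, hβ, hαβ⟩ := Submodule.mem_sup.mp h1
  rw [hI, Ideal.mem_colon_span_singleton] at hα
  rw [hI', Ideal.mem_colon_span_singleton] at hβ
  obtain ⟨r, hr⟩ := Ideal.mem_span_singleton'.mp hα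
  obtain ⟨s, hs⟩ := Ideal.mem_span_singleton'.mp hβ
  have hβα : β = 1 - α := by linear_combination hαβ
  exact ⟨α, r, s, by linear_combination -hr, by rw [← hβα]; linear_combination -hs⟩

/-- Distributivity of the ideal lattice of an arithmetical ring. -/
lemma arith_distrib {R : Type*} [CommRing R] (hA : IsArithmetical R)
    (A B C : Ideal R) : A ⊓ (B ⊔ C) = (A ⊓ B) ⊔ (A ⊓ C) := by
  refine le_antisymm ?_ (sup_le (inf_le_inf_left _ le_sup_left)
    (inf_le_inf_left _ le_sup_right))
  apply Ideal.le_of_localization_maximal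
  intro m hm
  set f := algebraMap R (Localization.AtPrime m)
  rw [map_inf_localization m.primeCompl, Ideal.map_sup, Ideal.map_sup,
    map_inf_localization m.primeCompl, map_inf_localization m.primeCompl]
  rcases hA m (Ideal.map f B) (Ideal.map f C) with h | h
  · rw [sup_eq_right.mpr h]
    exact le_sup_right
  · rw [sup_eq_left.mpr h]
    exact le_sup_left

/-- Let `R` be a commutative ring and `a, b, α, r, s ∈ R` with `a·α = b·r` and
`b·(1 − α) = a·s`.  Then `aR ∩ bR = a·α·R + b·(1 − α)·R`.  Consequently, in an arithmetical
ring the intersection of any two finitely generated ideals is finitely generated. -/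
theorem stmt19 {R : Type*} [CommRing R] :
    (∀ a b α r s : R, a * α = b * r → b * (1 - α) = a * s →
      Ideal.span {a} ⊓ Ideal.span {b} =
        Ideal.span {a * α} + Ideal.span {b * (1 - α)}) ∧
    (IsArithmetical R → ∀ A B : Ideal R, A.FG → B.FG → (A ⊓ B).FG) := by
  have part1 : ∀ a b α r s : R, a * α = b * r → b * (1 - α) = a * s →
      Ideal.span {a} ⊓ Ideal.span {b} =
        Ideal.span {a * α} + Ideal.span {b * (1 - α)} := by
    intro a b α r s h1 h2
    apply le_antisymm
    · rintro x ⟨hxa, hxb⟩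
      obtain ⟨u, hu⟩ := Ideal.mem_span_singleton'.mp hxa
      obtain ⟨v, hv⟩ := Ideal.mem_span_singleton'.mp hxb
      have hx : x = u * (a * α) + v * (b * (1 - α)) := by
        linear_combination -α * hu - (1 - α) * hv
      rw [hx]
      exact Ideal.add_mem _
        (Ideal.mem_sup_left (Ideal.mem_span_singleton'.mpr ⟨u, rfl⟩))
        (Ideal.mem_sup_right (Ideal.mem_span_singleton'.mpr ⟨v, rfl⟩))
    · refine sup_le (Ideal.span_le.mpr ?_) (Ideal.span_le.mpr ?_)
      · rintro x rfl
        exact ⟨Ideal.mem_span_singleton'.mpr ⟨α, by ring⟩,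
          Ideal.mem_span_singleton'.mpr ⟨r, by linear_combination -h1⟩⟩
      · rintro x rfl
        exact ⟨Ideal.mem_span_singleton'.mpr ⟨s, by linear_combination -h2⟩,
          Ideal.mem_span_singleton'.mpr ⟨1 - α, by ring⟩⟩
  refine ⟨part1, fun hA A B hAfg hBfg => ?_⟩
  have base : ∀ a : R, ∀ C : Ideal R, C.FG → (Ideal.span {a} ⊓ C).FG := by
    intro a C hC
    refine Submodule.fg_induction (motive := fun C _ => (Ideal.span {a} ⊓ C).FG) ?_ ?_ C hC
    · intro b
      obtain ⟨α, r, s, h1, h2⟩ := exists_alpha hA a b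
      show (Ideal.span {a} ⊓ Ideal.span {b}).FG
      rw [part1 a b α r s h1 h2]
      exact Submodule.FG.sup ⟨{a * α}, by simp⟩ ⟨{b * (1 - α)}, by simp⟩
    · intro C₁ C₂ _ _ h1 h2
      rw [arith_distrib hA]
      exact Submodule.FG.sup h1 h2
  refine Submodule.fg_induction (motive := fun A _ => ∀ C : Ideal R, C.FG → (A ⊓ C).FG)
    ?_ ?_ A hAfg B hBfg
  · exact base
  · intro A₁ A₂ _ _ h1 h2 C hC
    rw [inf_comm (A₁ ⊔ A₂) C, arith_distrib hA, inf_comm C A₁, inf_comm C A₂]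
    exact Submodule.FG.sup (h1 C hC) (h2 C hC)
end
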